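/- arXiv:1401.6833 — 5 statements merged into one kernel-verified Lean document; each statement's English description precedes it below -/
import Mathlib

section
/- Let 0 < l1 < l2 < L be real numbers. Then there exist a function ψ ∈ C³([0,L]) and a point l3 ∈ (l1,l2) such that: (C1) ψ(x) > 0 for all x ∈ [0,L]; (C2) for all x ∈ [0,L] \ (l1,l2) one has ψ'(x) ≠ 0, ψ''(x) < 0 and ψ'(x)·ψ'''(x) < 0; (C3) ψ'(0) < 0 and ψ'(L) > 0; (C4) ψ(l3) = min_{x∈[l1,l2]} ψ(x) < max_{x∈[l1,l2]} ψ(x) = ψ(l1) = ψ(l2), and max_{x∈[0,L]} ψ(x) = ψ(0) = ψ(L); (C5) ψ(0) < (4/3)·ψ(l3). -/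
set_option maxHeartbeats 1000000

open Set Filter Topology

noncomputable section CarlemanWeight

/-- Piecewise combination of two functions. -/
def pc (k : ℝ) (f g : ℝ → ℝ) : ℝ → ℝ := fun x => if x ≤ k then f x else g x

lemma pc_left {k x : ℝ} (h : x ≤ k) (f g : ℝ → ℝ) : pc k f g x = f x := if_pos h
lemma pc_right {k x : ℝ} (h : k < x) (f g : ℝ → ℝ) : pc k f g x = g x := if_neg (not_le.2 h)

lemma pc_hasDerivAt {k : ℝ} {f g f' g' : ℝ → ℝ}
    (hf : ∀ x, HasDerivAt f (f' x) x) (hg : ∀ x, HasDerivAt g (g' x) x)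
    (hval : f k = g k) (hder : f' k = g' k) (x : ℝ) :
    HasDerivAt (pc k f g) (pc k f' g' x) x := by
  rcases lt_trichotomy x k with hx | rfl | hx
  · rw [show pc k f' g' x = f' x from pc_left hx.le _ _]
    refine (hf x).congr_of_eventuallyEq ?_
    filter_upwards [Iio_mem_nhds hx] with y hy
    exact pc_left (le_of_lt hy) f g
  · rw [show pc x f' g' x = f' x from pc_left le_rfl _ _]
    rw [hasDerivAt_iff_tendsto_slope, ← nhdsLT_sup_nhdsGT]
    refine Filter.Tendsto.sup ?_ ?_
    · have h1 : Tendsto (slope f x) (𝓝[<] x) (𝓝 (f' x)) :=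
        (hasDerivAt_iff_tendsto_slope.1 (hf x)).mono_left
          (nhdsWithin_mono _ (fun y hy => ne_of_lt hy))
      refine h1.congr' ?_
      filter_upwards [self_mem_nhdsWithin] with y (hy : y < x)
      simp [slope, pc_left hy.le, pc_left (le_refl x)]
    · have h1 : Tendsto (slope g x) (𝓝[>] x) (𝓝 (f' x)) := by
        rw [hder]
        exact (hasDerivAt_iff_tendsto_slope.1 (hg x)).mono_left
          (nhdsWithin_mono _ (fun y hy => ne_of_gt hy))
      refine h1.congr' ?_
      filter_upwards [self_mem_nhdsWithin] with y (hy : x < y)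
      simp [slope, pc_right hy, pc_left (le_refl x), hval]
  · rw [show pc k f' g' x = g' x from pc_right hx _ _]
    refine (hg x).congr_of_eventuallyEq ?_
    filter_upwards [Ioi_mem_nhds hx] with y hy
    exact pc_right hy f g

lemma pc_continuous {k : ℝ} {f g : ℝ → ℝ} (hf : Continuous f) (hg : Continuous g)
    (hval : f k = g k) : Continuous (pc k f g) := by
  unfold pc
  exact Continuous.if_le hf hg continuous_id continuous_const (fun x hx => by rw [hx, hval])





def S5 (v : ℝ) : ℝ := 10*v^3 - 15*v^4 + 6*v^5
def S5d (v : ℝ) : ℝ := 30*v^2 - 60*v^3 + 30*v^4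
def S5dd (v : ℝ) : ℝ := 60*v - 180*v^2 + 120*v^3
def g0 (v : ℝ) : ℝ := 5/2*v^4 - 3*v^5 + v^6
def g1 (v : ℝ) : ℝ := 5/2*v^4 - 5*v^5 + 7/2*v^6 - 6/7*v^7
def g2 (v : ℝ) : ℝ := 5/2*v^4 - 7*v^5 + 23/3*v^6 - 27/7*v^7 + 3/4*v^8

lemma hasDerivAt_S5 (v : ℝ) : HasDerivAt S5 (S5d v) v := by
  have h : HasDerivAt (fun v : ℝ => 10*v^3 - 15*v^4 + 6*v^5)
      (10*(3*v^2) - 15*(4*v^3) + 6*(5*v^4)) v := by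
    have h3 := (hasDerivAt_pow 3 v).const_mul (10:ℝ)
    have h4 := (hasDerivAt_pow 4 v).const_mul (15:ℝ)
    have h5 := (hasDerivAt_pow 5 v).const_mul (6:ℝ)
    refine ((h3.sub h4).add h5).congr_deriv ?_
    all_goals (push_cast; ring)
  refine (h).congr_deriv ?_
  unfold S5d; ring

lemma hasDerivAt_S5d (v : ℝ) : HasDerivAt S5d (S5dd v) v := by
  have h : HasDerivAt (fun v : ℝ => 30*v^2 - 60*v^3 + 30*v^4)
      (30*(2*v) - 60*(3*v^2) + 30*(4*v^3)) v := by
    have h2 := (hasDerivAt_pow 2 v).const_mul (30:ℝ)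
    have h3 := (hasDerivAt_pow 3 v).const_mul (60:ℝ)
    have h4 := (hasDerivAt_pow 4 v).const_mul (30:ℝ)
    refine ((h2.sub h3).add h4).congr_deriv ?_
    all_goals (push_cast; ring)
  refine (h).congr_deriv ?_
  unfold S5dd; ring

lemma hasDerivAt_g0 (v : ℝ) : HasDerivAt g0 (S5 v) v := by
  have h : HasDerivAt (fun v : ℝ => 5/2*v^4 - 3*v^5 + v^6)
      (5/2*(4*v^3) - 3*(5*v^4) + 6*v^5) v := by
    have h4 := (hasDerivAt_pow 4 v).const_mul ((5:ℝ)/2)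
    have h5 := (hasDerivAt_pow 5 v).const_mul (3:ℝ)
    have h6 := hasDerivAt_pow 6 v
    refine ((h4.sub h5).add h6).congr_deriv ?_
    all_goals (push_cast; ring)
  refine (h).congr_deriv ?_
  unfold S5; ring

lemma hasDerivAt_g1 (v : ℝ) : HasDerivAt g1 ((1-v)*S5 v) v := by
  have h : HasDerivAt (fun v : ℝ => 5/2*v^4 - 5*v^5 + 7/2*v^6 - 6/7*v^7)
      (5/2*(4*v^3) - 5*(5*v^4) + 7/2*(6*v^5) - 6/7*(7*v^6)) v := by
    have h4 := (hasDerivAt_pow 4 v).const_mul ((5:ℝ)/2)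
    have h5 := (hasDerivAt_pow 5 v).const_mul (5:ℝ)
    have h6 := (hasDerivAt_pow 6 v).const_mul ((7:ℝ)/2)
    have h7 := (hasDerivAt_pow 7 v).const_mul ((6:ℝ)/7)
    refine (((h4.sub h5).add h6).sub h7).congr_deriv ?_
    all_goals (push_cast; ring)
  refine (h).congr_deriv ?_
  unfold S5; ring

lemma hasDerivAt_g2 (v : ℝ) : HasDerivAt g2 ((1-v)^2*S5 v) v := by
  have h : HasDerivAt (fun v : ℝ => 5/2*v^4 - 7*v^5 + 23/3*v^6 - 27/7*v^7 + 3/4*v^8)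
      (5/2*(4*v^3) - 7*(5*v^4) + 23/3*(6*v^5) - 27/7*(7*v^6) + 3/4*(8*v^7)) v := by
    have h4 := (hasDerivAt_pow 4 v).const_mul ((5:ℝ)/2)
    have h5 := (hasDerivAt_pow 5 v).const_mul (7:ℝ)
    have h6 := (hasDerivAt_pow 6 v).const_mul ((23:ℝ)/3)
    have h7 := (hasDerivAt_pow 7 v).const_mul ((27:ℝ)/7)
    have h8 := (hasDerivAt_pow 8 v).const_mul ((3:ℝ)/4)
    refine ((((h4.sub h5).add h6).sub h7).add h8).congr_deriv ?_
    all_goals (push_cast; ring)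
  refine (h).congr_deriv ?_
  unfold S5; ring

lemma S5_nonneg {v : ℝ} (h : 0 ≤ v) : 0 ≤ S5 v := by
  have : S5 v = v^3*(10 - 15*v + 6*v^2) := by unfold S5; ring
  rw [this]
  have h2 : 0 < 10 - 15*v + 6*v^2 := by nlinarith [sq_nonneg (v - 5/4)]
  positivity

lemma S5_pos {v : ℝ} (h : 0 < v) : 0 < S5 v := by
  have : S5 v = v^3*(10 - 15*v + 6*v^2) := by unfold S5; ring
  rw [this]
  have h2 : 0 < 10 - 15*v + 6*v^2 := by nlinarith [sq_nonneg (v - 5/4)]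
  positivity

lemma S5_le_one {v : ℝ} (h : v ≤ 1) : S5 v ≤ 1 := by
  have key : 1 - S5 v = S5 (1 - v) := by unfold S5; ring
  have := S5_nonneg (by linarith : (0:ℝ) ≤ 1 - v)
  linarith

lemma S5_one : S5 1 = 1 := by unfold S5; norm_num
lemma S5_zero : S5 0 = 0 := by unfold S5; norm_num
lemma S5d_one : S5d 1 = 0 := by unfold S5d; norm_num
lemma S5d_zero : S5d 0 = 0 := by unfold S5d; norm_num
lemma S5dd_one : S5dd 1 = 0 := by unfold S5dd; norm_num
lemma S5dd_zero : S5dd 0 = 0 := by unfold S5dd; norm_num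

lemma continuous_S5 : Continuous S5 := by unfold S5; fun_prop
lemma continuous_S5d : Continuous S5d := by unfold S5d; fun_prop
lemma continuous_S5dd : Continuous S5dd := by unfold S5dd; fun_prop





def cV2 (l1 d : ℝ) : ℝ := -(1/(4*(l1+d)))
def cJ (l1 d : ℝ) : ℝ := 3/(5*(l1+d)^2)
def cXL (l1 d : ℝ) : ℝ := 1 - l1/(8*(l1+d)) - l1^2/(10*(l1+d)^2)
def cXR (d r : ℝ) : ℝ := 1 - r/(8*(r+d)) - r^2/(10*(r+d)^2)
def cY (l1 d r : ℝ) : ℝ := l1*cXL l1 d/(r*cXR d r)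
def cV2' (l1 d r : ℝ) : ℝ := -(cY l1 d r/(4*(r+d)))
def cJ2 (l1 d r : ℝ) : ℝ := 3*cY l1 d r/(5*(r+d)^2)

lemma XL_pos {l1 d : ℝ} (hl1 : 0 < l1) (hd : 0 < d) : 0 < cXL l1 d := by
  unfold cXL
  have hc : 0 < l1 + d := by linarith
  have h1 : l1/(8*(l1+d)) ≤ 1/8 := by
    rw [div_le_div_iff₀ (by linarith) (by norm_num)]; linarith
  have h2 : l1^2/(10*(l1+d)^2) ≤ 1/10 := by
    rw [div_le_div_iff₀ (by positivity) (by norm_num)]; nlinarith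
  linarith

lemma XL_le_one {l1 d : ℝ} (hl1 : 0 < l1) (hd : 0 < d) : cXL l1 d ≤ 1 := by
  unfold cXL
  have hc : 0 < l1 + d := by linarith
  have h1 : 0 ≤ l1/(8*(l1+d)) := by positivity
  have h2 : 0 ≤ l1^2/(10*(l1+d)^2) := by positivity
  linarith

lemma XR_pos {d r : ℝ} (hd : 0 < d) (hr : 0 < r) : 0 < cXR d r := by
  unfold cXR
  have hc : 0 < r + d := by linarith
  have h1 : r/(8*(r+d)) ≤ 1/8 := by
    rw [div_le_div_iff₀ (by linarith) (by norm_num)]; linarith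
  have h2 : r^2/(10*(r+d)^2) ≤ 1/10 := by
    rw [div_le_div_iff₀ (by positivity) (by norm_num)]; nlinarith
  linarith

lemma Y_pos {l1 d r : ℝ} (hl1 : 0 < l1) (hd : 0 < d) (hr : 0 < r) : 0 < cY l1 d r := by
  unfold cY
  have h1 := XL_pos hl1 hd
  have h2 := XR_pos hd hr
  positivity

lemma V2_neg {l1 d : ℝ} (hl1 : 0 < l1) (hd : 0 < d) : cV2 l1 d < 0 := by
  unfold cV2
  have hc : 0 < l1 + d := by linarith
  simp only [neg_lt, neg_zero]
  positivity

lemma J_pos {l1 d : ℝ} (hl1 : 0 < l1) (hd : 0 < d) : 0 < cJ l1 d := by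
  unfold cJ
  have hc : 0 < l1 + d := by linarith
  positivity

lemma V2'_neg {l1 d r : ℝ} (hl1 : 0 < l1) (hd : 0 < d) (hr : 0 < r) : cV2' l1 d r < 0 := by
  unfold cV2'
  have h1 := Y_pos hl1 hd hr
  have hc : 0 < r + d := by linarith
  simp only [neg_lt, neg_zero]
  positivity

lemma J2_pos {l1 d r : ℝ} (hl1 : 0 < l1) (hd : 0 < d) (hr : 0 < r) : 0 < cJ2 l1 d r := by
  unfold cJ2
  have h1 := Y_pos hl1 hd hr
  have hc : 0 < r + d := by linarith
  positivity



def cGf (l1 d v : ℝ) : ℝ := -g0 v + (cV2 l1 d*(d/2))*g1 v + (cJ l1 d/2*(d^2/4))*g2 v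
def cGfD (l1 d v : ℝ) : ℝ := (-1 + cV2 l1 d*((d/2)*(1-v)) + cJ l1 d/2*((d/2)*(1-v))^2)*S5 v
def cGt (l1 d r v : ℝ) : ℝ := cY l1 d r*g0 v - (cV2' l1 d r*(d/2))*g1 v - (cJ2 l1 d r/2*(d^2/4))*g2 v
def cGtD (l1 d r v : ℝ) : ℝ :=
  (cY l1 d r + cV2' l1 d r*((d/2)*(v-1)) - cJ2 l1 d r/2*((d/2)*(v-1))^2)*S5 v
def cHb (d t : ℝ) : ℝ := (d/2)^3/4*t^4 - 3/5*(d/2)^2*t^5 + d/2/2*t^6 - 1/7*t^7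
def cIB (d : ℝ) : ℝ := (d/2)^7/140
def cTN (l1 d : ℝ) : ℝ := (d/2)*cGf l1 d 1
def cTP (l1 d r : ℝ) : ℝ := (d/2)*cGt l1 d r 1
def cT (l1 d r : ℝ) : ℝ := cTN l1 d + cTP l1 d r
def cmuL (l1 d r : ℝ) : ℝ := max (cT l1 d r) 0/cIB d
def cmuR (l1 d r : ℝ) : ℝ := max (-cT l1 d r) 0/cIB d
def cE0 (l1 d r : ℝ) : ℝ := -cTN l1 d + cmuL l1 d r*cIB d + l1*cXL l1 d
def cB (l1 d r : ℝ) : ℝ := 3*cE0 l1 d r + 1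
def uL (l1 d x : ℝ) : ℝ := 1 - 2/d*(x-l1)
def uR (l1 d x : ℝ) : ℝ := 2/d*(x-l1) - 1
def Qf (l1 d x : ℝ) : ℝ := -1 + cV2 l1 d*(x-l1) + cJ l1 d/2*(x-l1)^2
def Qt (l1 d r x : ℝ) : ℝ := cY l1 d r + cV2' l1 d r*(x-(l1+d)) - cJ2 l1 d r/2*(x-(l1+d))^2
def q1 (l1 d x : ℝ) : ℝ := cV2 l1 d + cJ l1 d*(x-l1)
def q4 (l1 d r x : ℝ) : ℝ := cV2' l1 d r - cJ2 l1 d r*(x-(l1+d))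
def bL (l1 d x : ℝ) : ℝ := (x-l1)^3*(d/2-(x-l1))^3
def bLd (l1 d x : ℝ) : ℝ := 3*(x-l1)^2*(d/2-(x-l1))^3 - 3*(x-l1)^3*(d/2-(x-l1))^2
def bLdd (l1 d x : ℝ) : ℝ :=
  6*(x-l1)*(d/2-(x-l1))^3 - 18*(x-l1)^2*(d/2-(x-l1))^2 + 6*(x-l1)^3*(d/2-(x-l1))
def bR (l1 d x : ℝ) : ℝ := (x-(l1+d/2))^3*((l1+d)-x)^3
def bRd (l1 d x : ℝ) : ℝ := 3*(x-(l1+d/2))^2*((l1+d)-x)^3 - 3*(x-(l1+d/2))^3*((l1+d)-x)^2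
def bRdd (l1 d x : ℝ) : ℝ :=
  6*(x-(l1+d/2))*((l1+d)-x)^3 - 18*(x-(l1+d/2))^2*((l1+d)-x)^2 + 6*(x-(l1+d/2))^3*((l1+d)-x)
def F1 (l1 d r x : ℝ) : ℝ :=
  (cB l1 d r - cTN l1 d + cmuL l1 d r*cIB d) + (l1-x) + cV2 l1 d/2*(l1-x)^2 - cJ l1 d/6*(l1-x)^3
def F2 (l1 d r x : ℝ) : ℝ :=
  cB l1 d r - (d/2)*cGf l1 d (uL l1 d x) - cmuL l1 d r*(cHb d (x-l1) - cIB d)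
def F3 (l1 d r x : ℝ) : ℝ :=
  cB l1 d r + (d/2)*cGt l1 d r (uR l1 d x) + cmuR l1 d r*cHb d (x-(l1+d/2))
def F4 (l1 d r x : ℝ) : ℝ :=
  (cB l1 d r + cTP l1 d r + cmuR l1 d r*cIB d) + cY l1 d r*(x-(l1+d))
    + cV2' l1 d r/2*(x-(l1+d))^2 - cJ2 l1 d r/6*(x-(l1+d))^3
def f2 (l1 d r x : ℝ) : ℝ := Qf l1 d x*S5 (uL l1 d x) - cmuL l1 d r*bL l1 d x
def f3 (l1 d r x : ℝ) : ℝ := Qt l1 d r x*S5 (uR l1 d x) + cmuR l1 d r*bR l1 d x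
def q2 (l1 d r x : ℝ) : ℝ :=
  q1 l1 d x*S5 (uL l1 d x) + Qf l1 d x*(S5d (uL l1 d x)*(-(2/d))) - cmuL l1 d r*bLd l1 d x
def q3 (l1 d r x : ℝ) : ℝ :=
  q4 l1 d r x*S5 (uR l1 d x) + Qt l1 d r x*(S5d (uR l1 d x)*(2/d)) + cmuR l1 d r*bRd l1 d x
def w2 (l1 d r x : ℝ) : ℝ :=
  cJ l1 d*S5 (uL l1 d x) + 2*(q1 l1 d x*(S5d (uL l1 d x)*(-(2/d))))
    + Qf l1 d x*(S5dd (uL l1 d x)*(4/d^2)) - cmuL l1 d r*bLdd l1 d x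
def w3 (l1 d r x : ℝ) : ℝ :=
  -cJ2 l1 d r*S5 (uR l1 d x) + 2*(q4 l1 d r x*(S5d (uR l1 d x)*(2/d)))
    + Qt l1 d r x*(S5dd (uR l1 d x)*(4/d^2)) + cmuR l1 d r*bRdd l1 d x

-- derivative lemmas
lemma hasDerivAt_sub_const (l1 x : ℝ) : HasDerivAt (fun x : ℝ => x - l1) 1 x :=
  (hasDerivAt_id x).sub_const l1

lemma hasDerivAt_uL (l1 d x : ℝ) : HasDerivAt (uL l1 d) (-(2/d)) x := by
  unfold uL
  have h := ((hasDerivAt_sub_const l1 x).const_mul (2/d)).const_sub 1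
  refine (h).congr_deriv ?_; ring

lemma hasDerivAt_uR (l1 d x : ℝ) : HasDerivAt (uR l1 d) (2/d) x := by
  unfold uR
  have h := ((hasDerivAt_sub_const l1 x).const_mul (2/d)).sub_const 1
  refine (h).congr_deriv ?_; ring

lemma hasDerivAt_Qf (l1 d x : ℝ) : HasDerivAt (Qf l1 d) (q1 l1 d x) x := by
  unfold Qf
  have h1 := hasDerivAt_sub_const l1 x
  have h := ((h1.const_mul (cV2 l1 d)).const_add (-1)).add ((h1.pow 2).const_mul (cJ l1 d/2))
  refine (h).congr_deriv ?_
  unfold q1; push_cast; ring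

lemma hasDerivAt_q1 (l1 d x : ℝ) : HasDerivAt (q1 l1 d) (cJ l1 d) x := by
  unfold q1
  have h := ((hasDerivAt_sub_const l1 x).const_mul (cJ l1 d)).const_add (cV2 l1 d)
  refine (h).congr_deriv ?_; ring

lemma hasDerivAt_Qt (l1 d r x : ℝ) : HasDerivAt (Qt l1 d r) (q4 l1 d r x) x := by
  unfold Qt
  have h1 := hasDerivAt_sub_const (l1+d) x
  have h := ((h1.const_mul (cV2' l1 d r)).const_add (cY l1 d r)).sub
    ((h1.pow 2).const_mul (cJ2 l1 d r/2))
  refine (h).congr_deriv ?_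
  unfold q4; push_cast; ring

lemma hasDerivAt_q4 (l1 d r x : ℝ) : HasDerivAt (q4 l1 d r) (-cJ2 l1 d r) x := by
  unfold q4
  have h := ((hasDerivAt_sub_const (l1+d) x).const_mul (cJ2 l1 d r)).const_sub (cV2' l1 d r)
  refine (h).congr_deriv ?_; ring

lemma hasDerivAt_bL (l1 d x : ℝ) : HasDerivAt (bL l1 d) (bLd l1 d x) x := by
  unfold bL
  have h1 := hasDerivAt_sub_const l1 x
  have h2 : HasDerivAt (fun x : ℝ => d/2 - (x - l1)) (-1) x := by
    have := h1.const_sub (d/2); simpa using this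
  have h := (h1.pow 3).mul (h2.pow 3)
  refine (h).congr_deriv ?_
  unfold bLd; simp only [Pi.pow_apply]; push_cast; ring

lemma hasDerivAt_bLd (l1 d x : ℝ) : HasDerivAt (bLd l1 d) (bLdd l1 d x) x := by
  unfold bLd
  have h1 := hasDerivAt_sub_const l1 x
  have h2 : HasDerivAt (fun x : ℝ => d/2 - (x - l1)) (-1) x := by
    have := h1.const_sub (d/2); simpa using this
  have h := (((h1.pow 2).const_mul (3:ℝ)).mul (h2.pow 3)).sub
    (((h1.pow 3).const_mul (3:ℝ)).mul (h2.pow 2))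
  refine (h).congr_deriv ?_
  unfold bLdd; simp only [Pi.pow_apply]; push_cast; ring

lemma hasDerivAt_bR (l1 d x : ℝ) : HasDerivAt (bR l1 d) (bRd l1 d x) x := by
  unfold bR
  have h1 := hasDerivAt_sub_const (l1+d/2) x
  have h2 : HasDerivAt (fun x : ℝ => (l1+d) - x) (-1) x := by
    have := (hasDerivAt_id x).const_sub (l1+d); simpa using this
  have h := (h1.pow 3).mul (h2.pow 3)
  refine (h).congr_deriv ?_
  unfold bRd; simp only [Pi.pow_apply]; push_cast; ring

lemma hasDerivAt_bRd (l1 d x : ℝ) : HasDerivAt (bRd l1 d) (bRdd l1 d x) x := by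
  unfold bRd
  have h1 := hasDerivAt_sub_const (l1+d/2) x
  have h2 : HasDerivAt (fun x : ℝ => (l1+d) - x) (-1) x := by
    have := (hasDerivAt_id x).const_sub (l1+d); simpa using this
  have h := (((h1.pow 2).const_mul (3:ℝ)).mul (h2.pow 3)).sub
    (((h1.pow 3).const_mul (3:ℝ)).mul (h2.pow 2))
  refine (h).congr_deriv ?_
  unfold bRdd; simp only [Pi.pow_apply]; push_cast; ring

lemma hasDerivAt_Gf (l1 d v : ℝ) : HasDerivAt (cGf l1 d) (cGfD l1 d v) v := by
  unfold cGf
  have h := (((hasDerivAt_g0 v).neg).add ((hasDerivAt_g1 v).const_mul (cV2 l1 d*(d/2)))).add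
    ((hasDerivAt_g2 v).const_mul (cJ l1 d/2*(d^2/4)))
  refine (h).congr_deriv ?_
  unfold cGfD; ring

lemma hasDerivAt_Gt (l1 d r v : ℝ) : HasDerivAt (cGt l1 d r) (cGtD l1 d r v) v := by
  unfold cGt
  have h := (((hasDerivAt_g0 v).const_mul (cY l1 d r)).sub
    ((hasDerivAt_g1 v).const_mul (cV2' l1 d r*(d/2)))).sub
    ((hasDerivAt_g2 v).const_mul (cJ2 l1 d r/2*(d^2/4)))
  refine (h).congr_deriv ?_
  unfold cGtD; ring

lemma hasDerivAt_Hb (d t : ℝ) : HasDerivAt (cHb d) (t^3*(d/2-t)^3) t := by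
  unfold cHb
  have h4 := (hasDerivAt_pow 4 t).const_mul ((d/2)^3/4)
  have h5 := (hasDerivAt_pow 5 t).const_mul (3/5*(d/2)^2)
  have h6 := (hasDerivAt_pow 6 t).const_mul ((d/2)/2)
  have h7 := (hasDerivAt_pow 7 t).const_mul ((1:ℝ)/7)
  have h := ((h4.sub h5).add h6).sub h7
  refine (h).congr_deriv ?_
  push_cast; ring




-- ### composite piece derivatives ###

lemma hasDerivAt_SuL (l1 d x : ℝ) :
    HasDerivAt (fun x => S5 (uL l1 d x)) (S5d (uL l1 d x)*(-(2/d))) x := by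
  have h := (hasDerivAt_S5 (uL l1 d x)).comp x (hasDerivAt_uL l1 d x)
  refine h.congr_deriv ?_; ring

lemma hasDerivAt_SduL (l1 d x : ℝ) :
    HasDerivAt (fun x => S5d (uL l1 d x)) (S5dd (uL l1 d x)*(-(2/d))) x := by
  have h := (hasDerivAt_S5d (uL l1 d x)).comp x (hasDerivAt_uL l1 d x)
  refine h.congr_deriv ?_; ring

lemma hasDerivAt_SuR (l1 d x : ℝ) :
    HasDerivAt (fun x => S5 (uR l1 d x)) (S5d (uR l1 d x)*(2/d)) x := by
  have h := (hasDerivAt_S5 (uR l1 d x)).comp x (hasDerivAt_uR l1 d x)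
  refine h.congr_deriv ?_; ring

lemma hasDerivAt_SduR (l1 d x : ℝ) :
    HasDerivAt (fun x => S5d (uR l1 d x)) (S5dd (uR l1 d x)*(2/d)) x := by
  have h := (hasDerivAt_S5d (uR l1 d x)).comp x (hasDerivAt_uR l1 d x)
  refine h.congr_deriv ?_; ring

lemma hasDerivAt_F1 (l1 d r x : ℝ) : HasDerivAt (F1 l1 d r) (Qf l1 d x) x := by
  unfold F1
  have h0 : HasDerivAt (fun x : ℝ => l1 - x) (-1) x := by
    simpa using (hasDerivAt_id x).const_sub l1
  have h := ((h0.const_add (cB l1 d r - cTN l1 d + cmuL l1 d r*cIB d)).add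
    ((h0.pow 2).const_mul (cV2 l1 d/2))).sub ((h0.pow 3).const_mul (cJ l1 d/6))
  refine (h).congr_deriv ?_
  unfold Qf; push_cast; ring

lemma hasDerivAt_F4 (l1 d r x : ℝ) : HasDerivAt (F4 l1 d r) (Qt l1 d r x) x := by
  unfold F4
  have h0 := hasDerivAt_sub_const (l1+d) x
  have h := ((h0.const_mul (cY l1 d r)).const_add
      (cB l1 d r + cTP l1 d r + cmuR l1 d r*cIB d)).add
      ((h0.pow 2).const_mul (cV2' l1 d r/2)) |>.sub ((h0.pow 3).const_mul (cJ2 l1 d r/6))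
  refine (h).congr_deriv ?_
  unfold Qt; push_cast; ring

lemma hasDerivAt_F2 (l1 d r : ℝ) (hd : d ≠ 0) (x : ℝ) :
    HasDerivAt (F2 l1 d r) (f2 l1 d r x) x := by
  unfold F2
  have hcomp : HasDerivAt (fun x => cGf l1 d (uL l1 d x)) (cGfD l1 d (uL l1 d x)*(-(2/d))) x := by
    have h := (hasDerivAt_Gf l1 d (uL l1 d x)).comp x (hasDerivAt_uL l1 d x)
    refine h.congr_deriv ?_; ring
  have hHb : HasDerivAt (fun x => cHb d (x - l1)) ((x-l1)^3*(d/2-(x-l1))^3) x := by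
    have h := (hasDerivAt_Hb d (x-l1)).comp x (hasDerivAt_sub_const l1 x)
    refine h.congr_deriv ?_; ring
  have h := ((hcomp.const_mul (d/2)).const_sub (cB l1 d r)).sub
    ((hHb.sub_const (cIB d)).const_mul (cmuL l1 d r))
  refine (h).congr_deriv ?_
  have e1 : (d/2)*(1 - uL l1 d x) = x - l1 := by unfold uL; field_simp; ring
  unfold f2 cGfD Qf bL
  rw [e1]
  field_simp

lemma hasDerivAt_F3 (l1 d r : ℝ) (hd : d ≠ 0) (x : ℝ) :
    HasDerivAt (F3 l1 d r) (f3 l1 d r x) x := by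
  unfold F3
  have hcomp : HasDerivAt (fun x => cGt l1 d r (uR l1 d x)) (cGtD l1 d r (uR l1 d x)*(2/d)) x := by
    have h := (hasDerivAt_Gt l1 d r (uR l1 d x)).comp x (hasDerivAt_uR l1 d x)
    refine h.congr_deriv ?_; ring
  have hHb : HasDerivAt (fun x => cHb d (x - (l1+d/2)))
      ((x-(l1+d/2))^3*(d/2-(x-(l1+d/2)))^3) x := by
    have h := (hasDerivAt_Hb d (x-(l1+d/2))).comp x (hasDerivAt_sub_const (l1+d/2) x)
    refine h.congr_deriv ?_; ring
  have h := ((hcomp.const_mul (d/2)).const_add (cB l1 d r)).add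
    (hHb.const_mul (cmuR l1 d r))
  refine (h).congr_deriv ?_
  have e2 : (d/2)*(uR l1 d x - 1) = x - (l1+d) := by unfold uR; field_simp; ring
  unfold f3 cGtD Qt bR
  rw [e2]
  have e3 : d/2-(x-(l1+d/2)) = (l1+d) - x := by ring
  rw [e3]
  field_simp

lemma hasDerivAt_f2 (l1 d r x : ℝ) : HasDerivAt (f2 l1 d r) (q2 l1 d r x) x := by
  unfold f2
  have h := ((hasDerivAt_Qf l1 d x).mul (hasDerivAt_SuL l1 d x)).sub
    ((hasDerivAt_bL l1 d x).const_mul (cmuL l1 d r))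
  refine (h).congr_deriv ?_
  all_goals (unfold q2; ring)

lemma hasDerivAt_f3 (l1 d r x : ℝ) : HasDerivAt (f3 l1 d r) (q3 l1 d r x) x := by
  unfold f3
  have h := ((hasDerivAt_Qt l1 d r x).mul (hasDerivAt_SuR l1 d x)).add
    ((hasDerivAt_bR l1 d x).const_mul (cmuR l1 d r))
  refine (h).congr_deriv ?_
  all_goals (unfold q3; ring)

lemma hasDerivAt_q2 (l1 d r x : ℝ) : HasDerivAt (q2 l1 d r) (w2 l1 d r x) x := by
  unfold q2
  have h := (((hasDerivAt_q1 l1 d x).mul (hasDerivAt_SuL l1 d x)).add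
    ((hasDerivAt_Qf l1 d x).mul ((hasDerivAt_SduL l1 d x).mul_const (-(2/d))))).sub
    ((hasDerivAt_bLd l1 d x).const_mul (cmuL l1 d r))
  refine (h).congr_deriv ?_
  unfold w2
  ring

lemma hasDerivAt_q3 (l1 d r x : ℝ) : HasDerivAt (q3 l1 d r) (w3 l1 d r x) x := by
  unfold q3
  have h := (((hasDerivAt_q4 l1 d r x).mul (hasDerivAt_SuR l1 d x)).add
    ((hasDerivAt_Qt l1 d r x).mul ((hasDerivAt_SduR l1 d x).mul_const (2/d)))).add
    ((hasDerivAt_bRd l1 d x).const_mul (cmuR l1 d r))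
  refine (h).congr_deriv ?_
  unfold w3
  ring


-- ### junction identities ###

section Junctions
variable (l1 d r : ℝ)

lemma uL_l1 : uL l1 d l1 = 1 := by unfold uL; simp
lemma uL_m (hd : d ≠ 0) : uL l1 d (l1 + d/2) = 0 := by unfold uL; field_simp; ring
lemma uR_m (hd : d ≠ 0) : uR l1 d (l1 + d/2) = 0 := by unfold uR; field_simp; ring
lemma uR_l2 (hd : d ≠ 0) : uR l1 d (l1 + d) = 1 := by unfold uR; field_simp; ring

lemma cGf_zero : cGf l1 d 0 = 0 := by unfold cGf g0 g1 g2; norm_num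
lemma cGt_zero : cGt l1 d r 0 = 0 := by unfold cGt g0 g1 g2; norm_num
lemma cHb_zero : cHb d 0 = 0 := by unfold cHb; norm_num
lemma cHb_half : cHb d (d/2) = cIB d := by unfold cHb cIB; ring

lemma jF_l1 : F1 l1 d r l1 = F2 l1 d r l1 := by
  unfold F1 F2
  rw [uL_l1]
  unfold cTN
  rw [sub_self, cHb_zero]
  ring

lemma jf_l1 : Qf l1 d l1 = f2 l1 d r l1 := by
  unfold f2 bL
  rw [uL_l1, S5_one, sub_self]
  ring

lemma jq_l1 : q1 l1 d l1 = q2 l1 d r l1 := by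
  unfold q2 bLd
  rw [uL_l1, S5_one, S5d_one, sub_self]
  ring

lemma jw_l1 : cJ l1 d = w2 l1 d r l1 := by
  unfold w2 bLdd
  rw [uL_l1, S5_one, S5d_one, S5dd_one, sub_self]
  ring

lemma jF_m (hd : d ≠ 0) : F2 l1 d r (l1 + d/2) = F3 l1 d r (l1 + d/2) := by
  unfold F2 F3
  rw [uL_m l1 d hd, uR_m l1 d hd, cGf_zero, cGt_zero]
  rw [show l1 + d/2 - l1 = d/2 by ring, cHb_half, show l1 + d/2 - (l1 + d/2) = 0 by ring, cHb_zero]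
  ring

lemma jf_m (hd : d ≠ 0) : f2 l1 d r (l1 + d/2) = f3 l1 d r (l1 + d/2) := by
  unfold f2 f3 bL bR
  rw [uL_m l1 d hd, uR_m l1 d hd, S5_zero]
  ring

lemma jq_m (hd : d ≠ 0) : q2 l1 d r (l1 + d/2) = q3 l1 d r (l1 + d/2) := by
  unfold q2 q3 bLd bRd
  rw [uL_m l1 d hd, uR_m l1 d hd, S5_zero, S5d_zero]
  ring

lemma jw_m (hd : d ≠ 0) : w2 l1 d r (l1 + d/2) = w3 l1 d r (l1 + d/2) := by
  unfold w2 w3 bLdd bRdd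
  rw [uL_m l1 d hd, uR_m l1 d hd, S5_zero, S5d_zero, S5dd_zero]
  ring

lemma jF_l2 (hd : d ≠ 0) : F3 l1 d r (l1 + d) = F4 l1 d r (l1 + d) := by
  unfold F3 F4
  rw [uR_l2 l1 d hd]
  unfold cTP
  rw [show l1 + d - (l1 + d/2) = d/2 by ring, cHb_half]
  ring

lemma jf_l2 (hd : d ≠ 0) : f3 l1 d r (l1 + d) = Qt l1 d r (l1 + d) := by
  unfold f3 bR
  rw [uR_l2 l1 d hd, S5_one]
  ring

lemma jq_l2 (hd : d ≠ 0) : q3 l1 d r (l1 + d) = q4 l1 d r (l1 + d) := by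
  unfold q3 bRd
  rw [uR_l2 l1 d hd, S5_one, S5d_one]
  ring

lemma jw_l2 (hd : d ≠ 0) : w3 l1 d r (l1 + d) = -cJ2 l1 d r := by
  unfold w3 bRdd
  rw [uR_l2 l1 d hd, S5_one, S5d_one, S5dd_one]
  ring

end Junctions


-- ### global assembly ###

def psi (l1 d r : ℝ) : ℝ → ℝ :=
  pc l1 (F1 l1 d r) (pc (l1+d/2) (F2 l1 d r) (pc (l1+d) (F3 l1 d r) (F4 l1 d r)))
def psi1 (l1 d r : ℝ) : ℝ → ℝ :=
  pc l1 (Qf l1 d) (pc (l1+d/2) (f2 l1 d r) (pc (l1+d) (f3 l1 d r) (Qt l1 d r)))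
def psi2 (l1 d r : ℝ) : ℝ → ℝ :=
  pc l1 (q1 l1 d) (pc (l1+d/2) (q2 l1 d r) (pc (l1+d) (q3 l1 d r) (q4 l1 d r)))
def psi3 (l1 d r : ℝ) : ℝ → ℝ :=
  pc l1 (fun _ => cJ l1 d) (pc (l1+d/2) (w2 l1 d r) (pc (l1+d) (w3 l1 d r) (fun _ => -cJ2 l1 d r)))

section Assembly
variable {l1 d r : ℝ}

lemma psi_hasDerivAt (hd : 0 < d) (x : ℝ) :
    HasDerivAt (psi l1 d r) (psi1 l1 d r x) x := by
  have hd' : d ≠ 0 := ne_of_gt hd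
  have hm2 : l1 + d/2 ≤ l1 + d := by linarith
  have hlm : l1 ≤ l1 + d/2 := by linarith
  have h34 := fun x => pc_hasDerivAt (f := F3 l1 d r) (g := F4 l1 d r)
    (hasDerivAt_F3 l1 d r hd') (hasDerivAt_F4 l1 d r) (jF_l2 l1 d r hd') (jf_l2 l1 d r hd') x
  have h234 := fun x => pc_hasDerivAt (k := l1+d/2)
    (hasDerivAt_F2 l1 d r hd') h34
    (by rw [pc_left hm2]; exact jF_m l1 d r hd')
    (by rw [pc_left hm2]; exact jf_m l1 d r hd') x
  exact pc_hasDerivAt (k := l1) (hasDerivAt_F1 l1 d r) h234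
    (by rw [pc_left hlm]; exact jF_l1 l1 d r)
    (by rw [pc_left hlm]; exact jf_l1 l1 d r) x

lemma psi1_hasDerivAt (hd : 0 < d) (x : ℝ) :
    HasDerivAt (psi1 l1 d r) (psi2 l1 d r x) x := by
  have hd' : d ≠ 0 := ne_of_gt hd
  have hm2 : l1 + d/2 ≤ l1 + d := by linarith
  have hlm : l1 ≤ l1 + d/2 := by linarith
  have h34 := fun x => pc_hasDerivAt (f := f3 l1 d r) (g := Qt l1 d r)
    (hasDerivAt_f3 l1 d r) (hasDerivAt_Qt l1 d r) (jf_l2 l1 d r hd') (jq_l2 l1 d r hd') x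
  have h234 := fun x => pc_hasDerivAt (k := l1+d/2)
    (hasDerivAt_f2 l1 d r) h34
    (by rw [pc_left hm2]; exact jf_m l1 d r hd')
    (by rw [pc_left hm2]; exact jq_m l1 d r hd') x
  exact pc_hasDerivAt (k := l1) (hasDerivAt_Qf l1 d) h234
    (by rw [pc_left hlm]; exact jf_l1 l1 d r)
    (by rw [pc_left hlm]; exact jq_l1 l1 d r) x

lemma psi2_hasDerivAt (hd : 0 < d) (x : ℝ) :
    HasDerivAt (psi2 l1 d r) (psi3 l1 d r x) x := by
  have hd' : d ≠ 0 := ne_of_gt hd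
  have hm2 : l1 + d/2 ≤ l1 + d := by linarith
  have hlm : l1 ≤ l1 + d/2 := by linarith
  have h34 := fun x => pc_hasDerivAt (f := q3 l1 d r) (g := q4 l1 d r)
    (hasDerivAt_q3 l1 d r) (hasDerivAt_q4 l1 d r) (jq_l2 l1 d r hd') (jw_l2 l1 d r hd') x
  have h234 := fun x => pc_hasDerivAt (k := l1+d/2)
    (hasDerivAt_q2 l1 d r) h34
    (by rw [pc_left hm2]; exact jq_m l1 d r hd')
    (by rw [pc_left hm2]; exact jw_m l1 d r hd') x
  exact pc_hasDerivAt (k := l1) (hasDerivAt_q1 l1 d) h234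
    (by rw [pc_left hlm]; exact jq_l1 l1 d r)
    (by rw [pc_left hlm]; exact jw_l1 l1 d r) x

lemma continuous_w2 : Continuous (w2 l1 d r) := by
  unfold w2 q1 Qf uL bLdd
  have := continuous_S5; have := continuous_S5d; have := continuous_S5dd
  fun_prop

lemma continuous_w3 : Continuous (w3 l1 d r) := by
  unfold w3 q4 Qt uR bRdd
  have := continuous_S5; have := continuous_S5d; have := continuous_S5dd
  fun_prop

lemma continuous_psi3 (hd : 0 < d) : Continuous (psi3 l1 d r) := by
  have hd' : d ≠ 0 := ne_of_gt hd
  have hm2 : l1 + d/2 ≤ l1 + d := by linarith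
  have hlm : l1 ≤ l1 + d/2 := by linarith
  unfold psi3
  refine pc_continuous continuous_const (pc_continuous continuous_w2
    (pc_continuous continuous_w3 continuous_const (jw_l2 l1 d r hd')) ?_) ?_
  · rw [pc_left hm2]; exact jw_m l1 d r hd'
  · rw [pc_left hlm]; exact jw_l1 l1 d r

lemma deriv_psi (hd : 0 < d) : deriv (psi l1 d r) = psi1 l1 d r :=
  funext fun x => (psi_hasDerivAt hd x).deriv
lemma deriv_psi1 (hd : 0 < d) : deriv (psi1 l1 d r) = psi2 l1 d r :=
  funext fun x => (psi1_hasDerivAt hd x).deriv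
lemma deriv_psi2 (hd : 0 < d) : deriv (psi2 l1 d r) = psi3 l1 d r :=
  funext fun x => (psi2_hasDerivAt hd x).deriv

lemma contDiff_psi (hd : 0 < d) : ContDiff ℝ 3 (psi l1 d r) := by
  have e3 : (3 : WithTop ℕ∞) = 2 + 1 := by norm_num
  have e2 : (2 : WithTop ℕ∞) = 1 + 1 := by norm_num
  have e1 : (1 : WithTop ℕ∞) = 0 + 1 := by norm_num
  rw [e3, contDiff_succ_iff_deriv]
  refine ⟨fun x => (psi_hasDerivAt hd x).differentiableAt, by simp, ?_⟩
  rw [deriv_psi hd, e2, contDiff_succ_iff_deriv]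
  refine ⟨fun x => (psi1_hasDerivAt hd x).differentiableAt, by simp, ?_⟩
  rw [deriv_psi1 hd, e1, contDiff_succ_iff_deriv]
  refine ⟨fun x => (psi2_hasDerivAt hd x).differentiableAt, by simp, ?_⟩
  rw [deriv_psi2 hd]
  exact contDiff_zero.mpr (continuous_psi3 hd)

end Assembly


-- ### sign lemmas ###

lemma IB_pos {d : ℝ} (hd : 0 < d) : 0 < cIB d := by unfold cIB; positivity

lemma muL_nonneg {l1 d r : ℝ} (hd : 0 < d) : 0 ≤ cmuL l1 d r :=
  div_nonneg (le_max_right _ _) (le_of_lt (IB_pos hd))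

lemma muR_nonneg {l1 d r : ℝ} (hd : 0 < d) : 0 ≤ cmuR l1 d r :=
  div_nonneg (le_max_right _ _) (le_of_lt (IB_pos hd))

lemma Qf_neg {l1 d : ℝ} (hl1 : 0 < l1) (hd : 0 < d) {x : ℝ}
    (hx0 : 0 ≤ x) (hxm : x ≤ l1 + d/2) : Qf l1 d x < 0 := by
  have hc : 0 < l1 + d := by linarith
  have key : Qf l1 d x =
      (-20*(l1+d)^2 + 5*(l1+d)*(l1-x) + 6*(l1-x)^2)/(20*(l1+d)^2) := by
    unfold Qf cV2 cJ; field_simp; ring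
  rw [key]
  apply div_neg_of_neg_of_pos
  · have h1 : l1 - x ≤ l1 := by linarith
    have h2 : -(d/2) ≤ l1 - x := by linarith
    nlinarith [sq_nonneg (l1 - x), sq_nonneg d, sq_nonneg l1, mul_pos hl1 hd]
  · positivity

lemma q1_neg {l1 d : ℝ} (hl1 : 0 < l1) (hd : 0 < d) {x : ℝ} (hx : x ≤ l1) :
    q1 l1 d x < 0 := by
  have hJ := J_pos hl1 hd
  have hV := V2_neg hl1 hd
  unfold q1
  nlinarith

lemma Qt_pos {l1 d r : ℝ} (hl1 : 0 < l1) (hd : 0 < d) (hr : 0 < r) {x : ℝ}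
    (hxm : l1 + d/2 ≤ x) (hxL : x ≤ l1 + d + r) : 0 < Qt l1 d r x := by
  have hc : 0 < r + d := by linarith
  have hY := Y_pos hl1 hd hr
  have key : Qt l1 d r x = cY l1 d r *
      ((20*(r+d)^2 - 5*(r+d)*(x-(l1+d)) - 6*(x-(l1+d))^2)/(20*(r+d)^2)) := by
    unfold Qt cV2' cJ2; field_simp; ring
  rw [key]
  apply mul_pos hY
  apply div_pos
  · have h1 : x - (l1+d) ≤ r := by linarith
    have h2 : -(d/2) ≤ x - (l1+d) := by linarith
    nlinarith [sq_nonneg (x - (l1+d)), mul_pos hr hd]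
  · positivity

lemma q4_neg {l1 d r : ℝ} (hl1 : 0 < l1) (hd : 0 < d) (hr : 0 < r) {x : ℝ}
    (hx : l1 + d ≤ x) : q4 l1 d r x < 0 := by
  have hJ2 := J2_pos hl1 hd hr
  have hV := V2'_neg hl1 hd hr
  unfold q4
  nlinarith

lemma uL_nonneg {l1 d : ℝ} (hd : 0 < d) {x : ℝ} (hx : x ≤ l1 + d/2) : 0 ≤ uL l1 d x := by
  unfold uL
  have h : 2/d*(x-l1) ≤ 1 := by
    rw [div_mul_eq_mul_div, div_le_one hd]; linarith
  linarith

lemma uL_pos {l1 d : ℝ} (hd : 0 < d) {x : ℝ} (hx : x < l1 + d/2) : 0 < uL l1 d x := by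
  unfold uL
  have h : 2/d*(x-l1) < 1 := by
    rw [div_mul_eq_mul_div, div_lt_one hd]; linarith
  linarith

lemma uR_pos {l1 d : ℝ} (hd : 0 < d) {x : ℝ} (hx : l1 + d/2 < x) : 0 < uR l1 d x := by
  unfold uR
  have h : 1 < 2/d*(x-l1) := by
    rw [div_mul_eq_mul_div, lt_div_iff₀ hd]; linarith
  linarith

lemma bL_nonneg {l1 d : ℝ} {x : ℝ} (hx1 : l1 ≤ x) (hx2 : x ≤ l1 + d/2) : 0 ≤ bL l1 d x := by
  unfold bL
  have h1 : 0 ≤ x - l1 := by linarith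
  have h2 : 0 ≤ d/2 - (x - l1) := by linarith
  positivity

lemma bR_nonneg {l1 d : ℝ} {x : ℝ} (hx1 : l1 + d/2 ≤ x) (hx2 : x ≤ l1 + d) : 0 ≤ bR l1 d x := by
  unfold bR
  have h1 : 0 ≤ x - (l1 + d/2) := by linarith
  have h2 : 0 ≤ (l1 + d) - x := by linarith
  positivity

lemma f2_neg {l1 d r : ℝ} (hl1 : 0 < l1) (hd : 0 < d) {x : ℝ}
    (hx1 : l1 ≤ x) (hx2 : x < l1 + d/2) : f2 l1 d r x < 0 := by
  unfold f2
  have hQ : Qf l1 d x < 0 := Qf_neg hl1 hd (by linarith) (by linarith)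
  have hS : 0 < S5 (uL l1 d x) := S5_pos (uL_pos hd hx2)
  have hb : 0 ≤ cmuL l1 d r*bL l1 d x :=
    mul_nonneg (muL_nonneg hd) (bL_nonneg hx1 (le_of_lt hx2))
  nlinarith [mul_pos_of_neg_of_neg hQ (by linarith : -S5 (uL l1 d x) < 0)]

lemma f3_pos {l1 d r : ℝ} (hl1 : 0 < l1) (hd : 0 < d) (hr : 0 < r) {x : ℝ}
    (hx1 : l1 + d/2 < x) (hx2 : x ≤ l1 + d) : 0 < f3 l1 d r x := by
  unfold f3
  have hQ : 0 < Qt l1 d r x := Qt_pos hl1 hd hr (le_of_lt hx1) (by linarith)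
  have hS : 0 < S5 (uR l1 d x) := S5_pos (uR_pos hd hx1)
  have hb : 0 ≤ cmuR l1 d r*bR l1 d x :=
    mul_nonneg (muR_nonneg hd) (bR_nonneg (le_of_lt hx1) hx2)
  nlinarith [mul_pos hQ hS]


-- ### evaluation lemmas ###

lemma psi1_eval_left {l1 d r x : ℝ} (hx : x ≤ l1) : psi1 l1 d r x = Qf l1 d x := by
  unfold psi1; rw [pc_left hx]

lemma psi1_eval_f2 {l1 d r x : ℝ} (hx1 : l1 < x) (hx2 : x ≤ l1 + d/2) :
    psi1 l1 d r x = f2 l1 d r x := by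
  unfold psi1; rw [pc_right hx1, pc_left hx2]

lemma psi1_eval_f3 {l1 d r x : ℝ} (hd : 0 < d) (hx1 : l1 + d/2 < x) (hx2 : x ≤ l1 + d) :
    psi1 l1 d r x = f3 l1 d r x := by
  unfold psi1; rw [pc_right (by linarith), pc_right hx1, pc_left hx2]

lemma psi1_eval_right {l1 d r x : ℝ} (hd : 0 < d) (hx : l1 + d ≤ x) :
    psi1 l1 d r x = Qt l1 d r x := by
  unfold psi1
  rcases eq_or_lt_of_le hx with h | h
  · rw [pc_right (by linarith), pc_right (by linarith), pc_left (le_of_eq h.symm), ← h]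
    exact jf_l2 l1 d r (ne_of_gt hd)
  · rw [pc_right (by linarith), pc_right (by linarith), pc_right h]

lemma psi2_eval_left {l1 d r x : ℝ} (hx : x ≤ l1) : psi2 l1 d r x = q1 l1 d x := by
  unfold psi2; rw [pc_left hx]

lemma psi2_eval_right {l1 d r x : ℝ} (hd : 0 < d) (hx : l1 + d ≤ x) :
    psi2 l1 d r x = q4 l1 d r x := by
  unfold psi2
  rcases eq_or_lt_of_le hx with h | h
  · rw [pc_right (by linarith), pc_right (by linarith), pc_left (le_of_eq h.symm), ← h]
    exact jq_l2 l1 d r (ne_of_gt hd)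
  · rw [pc_right (by linarith), pc_right (by linarith), pc_right h]

lemma psi3_eval_left {l1 d r x : ℝ} (hx : x ≤ l1) : psi3 l1 d r x = cJ l1 d := by
  unfold psi3; rw [pc_left hx]

lemma psi3_eval_right {l1 d r x : ℝ} (hd : 0 < d) (hx : l1 + d ≤ x) :
    psi3 l1 d r x = -cJ2 l1 d r := by
  unfold psi3
  rcases eq_or_lt_of_le hx with h | h
  · rw [pc_right (by linarith), pc_right (by linarith), pc_left (le_of_eq h.symm), ← h]
    exact jw_l2 l1 d r (ne_of_gt hd)
  · rw [pc_right (by linarith), pc_right (by linarith), pc_right h]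

lemma psi_eval_F1 {l1 d r x : ℝ} (hx : x ≤ l1) : psi l1 d r x = F1 l1 d r x := by
  unfold psi; rw [pc_left hx]

-- ### value identities ###

lemma psi_at_l1 {l1 d r : ℝ} :
    psi l1 d r l1 = cB l1 d r - cTN l1 d + cmuL l1 d r*cIB d := by
  rw [psi_eval_F1 le_rfl]; unfold F1; simp

lemma psi_at_l2 {l1 d r : ℝ} (hl1 : 0 < l1) (hd : 0 < d) :
    psi l1 d r (l1+d) = cB l1 d r + cTP l1 d r + cmuR l1 d r*cIB d := by
  unfold psi
  rw [pc_right (by linarith), pc_right (by linarith), pc_left le_rfl,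
    jF_l2 l1 d r (ne_of_gt hd)]
  unfold F4; simp

lemma psi_at_m {l1 d r : ℝ} (hd : 0 < d) : psi l1 d r (l1 + d/2) = cB l1 d r := by
  unfold psi
  rw [pc_right (by linarith), pc_left le_rfl]
  unfold F2
  rw [uL_m l1 d (ne_of_gt hd), cGf_zero, show l1 + d/2 - l1 = d/2 by ring, cHb_half]
  simp

lemma muIB_L {l1 d r : ℝ} (hd : 0 < d) : cmuL l1 d r*cIB d = max (cT l1 d r) 0 := by
  unfold cmuL
  field_simp [ne_of_gt (IB_pos hd)]

lemma muIB_R {l1 d r : ℝ} (hd : 0 < d) : cmuR l1 d r*cIB d = max (-cT l1 d r) 0 := by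
  unfold cmuR
  field_simp [ne_of_gt (IB_pos hd)]

lemma psi_l1_eq_l2 {l1 d r : ℝ} (hl1 : 0 < l1) (hd : 0 < d) :
    psi l1 d r l1 = psi l1 d r (l1+d) := by
  rw [psi_at_l1, psi_at_l2 hl1 hd]
  have h : cmuL l1 d r*cIB d - cmuR l1 d r*cIB d = cT l1 d r := by
    rw [muIB_L hd, muIB_R hd]
    rcases le_total (cT l1 d r) 0 with h | h
    · rw [max_eq_right h, max_eq_left (by linarith)]; ring
    · rw [max_eq_left h, max_eq_right (by linarith)]; ring
  unfold cT at h
  linarith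

lemma psi_at_0 {l1 d r : ℝ} (hl1 : 0 < l1) (hd : 0 < d) :
    psi l1 d r 0 = psi l1 d r l1 + l1*cXL l1 d := by
  rw [psi_eval_F1 (le_of_lt hl1), psi_at_l1]
  have hc : (l1 + d) ≠ 0 := by positivity
  unfold F1 cXL cV2 cJ
  field_simp
  ring

lemma psi_eval_F4 {l1 d r x : ℝ} (hd : 0 < d) (hx : l1 + d < x) :
    psi l1 d r x = F4 l1 d r x := by
  unfold psi
  rw [pc_right (by linarith), pc_right (by linarith), pc_right hx]

lemma psi_at_L {l1 d r : ℝ} (hl1 : 0 < l1) (hd : 0 < d) (hr : 0 < r) :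
    psi l1 d r (l1+d+r) = psi l1 d r (l1+d) + cY l1 d r*(r*cXR d r) := by
  rw [psi_eval_F4 hd (by linarith), psi_at_l2 hl1 hd]
  have hc : (r + d) ≠ 0 := by positivity
  unfold F4 cXR cV2' cJ2
  field_simp
  ring

lemma psi_0_eq_L {l1 d r : ℝ} (hl1 : 0 < l1) (hd : 0 < d) (hr : 0 < r) :
    psi l1 d r 0 = psi l1 d r (l1+d+r) := by
  rw [psi_at_0 hl1 hd, psi_at_L hl1 hd hr, psi_l1_eq_l2 hl1 hd]
  have hXR := XR_pos hd hr
  have hY : cY l1 d r*(r*cXR d r) = l1*cXL l1 d := by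
    unfold cY
    field_simp
  linarith

lemma psi_0_val {l1 d r : ℝ} (hl1 : 0 < l1) (hd : 0 < d) :
    psi l1 d r 0 = cB l1 d r + cE0 l1 d r := by
  rw [psi_at_0 hl1 hd, psi_at_l1]
  unfold cE0
  ring


-- ### monotonicity ###

lemma psi_differentiable {l1 d r : ℝ} (hd : 0 < d) : Differentiable ℝ (psi l1 d r) :=
  fun x => (psi_hasDerivAt hd x).differentiableAt

lemma psi_anti {l1 d r : ℝ} (hl1 : 0 < l1) (hd : 0 < d) :
    StrictAntiOn (psi l1 d r) (Icc 0 (l1 + d/2)) := by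
  apply strictAntiOn_of_deriv_neg (convex_Icc _ _)
    (psi_differentiable hd).continuous.continuousOn
  intro x hx
  rw [interior_Icc] at hx
  obtain ⟨hx0, hxm⟩ := hx
  rw [deriv_psi hd]
  rcases le_or_gt x l1 with h | h
  · rw [psi1_eval_left h]
    exact Qf_neg hl1 hd (le_of_lt hx0) (by linarith)
  · rw [psi1_eval_f2 h (le_of_lt hxm)]
    exact f2_neg hl1 hd (le_of_lt h) hxm

lemma psi_mono {l1 d r : ℝ} (hl1 : 0 < l1) (hd : 0 < d) (hr : 0 < r) :
    StrictMonoOn (psi l1 d r) (Icc (l1 + d/2) (l1 + d + r)) := by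
  apply strictMonoOn_of_deriv_pos (convex_Icc _ _)
    (psi_differentiable hd).continuous.continuousOn
  intro x hx
  rw [interior_Icc] at hx
  obtain ⟨hxm, hxL⟩ := hx
  rw [deriv_psi hd]
  rcases le_or_gt x (l1 + d) with h | h
  · rw [psi1_eval_f3 hd hxm h]
    exact f3_pos hl1 hd hr hxm h
  · rw [psi1_eval_right hd (le_of_lt h)]
    exact Qt_pos hl1 hd hr (by linarith) (le_of_lt hxL)

end CarlemanWeight

/-- existence of a Carleman weight function `ψ ∈ C³([0,L])` and
`l3 ∈ (l1,l2)` satisfying conditions (C1)–(C5). -/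
theorem stmt_0 (L l1 l2 : ℝ) (hl1 : 0 < l1) (hl12 : l1 < l2) (hl2 : l2 < L) :
    ∃ (ψ : ℝ → ℝ) (l3 : ℝ), ContDiff ℝ 3 ψ ∧ l3 ∈ Set.Ioo l1 l2 ∧
      -- (C1)
      (∀ x ∈ Set.Icc (0:ℝ) L, 0 < ψ x) ∧
      -- (C2)
      (∀ x ∈ Set.Icc (0:ℝ) L, x ∉ Set.Ioo l1 l2 →
        deriv ψ x ≠ 0 ∧ deriv (deriv ψ) x < 0 ∧
          deriv ψ x * deriv (deriv (deriv ψ)) x < 0) ∧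
      -- (C3)
      deriv ψ 0 < 0 ∧ 0 < deriv ψ L ∧
      -- (C4)
      (∀ x ∈ Set.Icc l1 l2, ψ l3 ≤ ψ x) ∧
      (∀ x ∈ Set.Icc l1 l2, ψ x ≤ ψ l1) ∧
      ψ l3 < ψ l1 ∧ ψ l1 = ψ l2 ∧
      (∀ x ∈ Set.Icc (0:ℝ) L, ψ x ≤ ψ 0) ∧ ψ 0 = ψ L ∧
      -- (C5)
      ψ 0 < (4 / 3) * ψ l3 := by
  set D := l2 - l1 with hD
  set R := L - l2 with hR
  have hd : 0 < D := by rw [hD]; linarith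
  have hr : 0 < R := by rw [hR]; linarith
  have el2 : l1 + D = l2 := by rw [hD]; ring
  have eL : l1 + D + R = L := by rw [hD, hR]; ring
  set m := l1 + D/2 with hm
  have hl1m : l1 < m := by rw [hm]; linarith
  have hml2 : m < l2 := by rw [hm, ← el2]; linarith
  have h0m : (0:ℝ) < m := by linarith
  have hmL : m < L := by linarith
  -- shared facts
  have hanti := psi_anti (l1:=l1) (d:=D) (r:=R) hl1 hd
  have hmono := psi_mono (l1:=l1) (d:=D) (r:=R) hl1 hd hr
  have hpsim : psi l1 D R (l1 + D/2) = cB l1 D R := psi_at_m hd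
  have hE0 : 0 ≤ cE0 l1 D R := by
    have h1 := psi_0_val (l1:=l1) (d:=D) (r:=R) hl1 hd
    have h3 : psi l1 D R (l1 + D/2) ≤ psi l1 D R 0 :=
      hanti.antitoneOn ⟨le_rfl, by linarith⟩ ⟨by linarith, le_rfl⟩ (by linarith)
    linarith
  refine ⟨psi l1 D R, m, contDiff_psi hd, ⟨hl1m, hml2⟩, ?_, ?_, ?_, ?_, ?_, ?_, ?_, ?_, ?_, ?_, ?_⟩
  · -- C1
    rintro x ⟨hx0, hxL⟩
    rcases le_or_gt x (l1 + D/2) with h | h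
    · have := hanti.antitoneOn ⟨hx0, h⟩ ⟨by linarith, le_rfl⟩ h
      unfold cB at *; linarith
    · have := hmono.monotoneOn ⟨le_rfl, by linarith⟩ ⟨by linarith, by linarith⟩ (le_of_lt h)
      unfold cB at *; linarith
  · -- C2
    rintro x ⟨hx0, hxL⟩ hnot
    rw [deriv_psi hd, deriv_psi1 hd, deriv_psi2 hd]
    rcases le_or_gt x l1 with h | h
    · rw [psi1_eval_left h, psi2_eval_left h, psi3_eval_left h]
      have hQ := Qf_neg hl1 hd hx0 (by linarith)
      exact ⟨ne_of_lt hQ, q1_neg hl1 hd h, mul_neg_of_neg_of_pos hQ (J_pos hl1 hd)⟩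
    · have h2 : l1 + D ≤ x := by
        rcases le_or_gt l2 x with h' | h'
        · linarith
        · exact absurd ⟨h, h'⟩ hnot
      rw [psi1_eval_right hd h2, psi2_eval_right hd h2, psi3_eval_right hd h2]
      have hQ := Qt_pos hl1 hd hr (by linarith) (by linarith)
      exact ⟨ne_of_gt hQ, q4_neg hl1 hd hr h2,
        mul_neg_of_pos_of_neg hQ (by linarith [J2_pos hl1 hd hr])⟩
  · -- C3 left
    rw [deriv_psi hd, psi1_eval_left (le_of_lt hl1)]
    exact Qf_neg hl1 hd le_rfl (by linarith)
  · -- C3 right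
    rw [deriv_psi hd, psi1_eval_right hd (by linarith)]
    exact Qt_pos hl1 hd hr (by linarith) (by linarith)
  · -- C4 min
    rintro x ⟨hx1, hx2⟩
    rcases le_or_gt x (l1 + D/2) with h | h
    · exact hanti.antitoneOn ⟨by linarith, h⟩ ⟨by linarith, le_rfl⟩ h
    · exact hmono.monotoneOn ⟨le_rfl, by linarith⟩ ⟨by linarith, by linarith⟩ (le_of_lt h)
  · -- C4 max on [l1,l2]
    rintro x ⟨hx1, hx2⟩
    rcases le_or_gt x (l1 + D/2) with h | h
    · exact hanti.antitoneOn ⟨by linarith, by linarith⟩ ⟨by linarith, h⟩ hx1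
    · have h1 : psi l1 D R x ≤ psi l1 D R (l1 + D) :=
        hmono.monotoneOn ⟨by linarith, by linarith⟩ ⟨by linarith, by linarith⟩ (by linarith)
      have h2 := psi_l1_eq_l2 (l1:=l1) (d:=D) (r:=R) hl1 hd
      linarith
  · -- psi l3 < psi l1
    exact hanti ⟨by linarith, by linarith⟩ ⟨by linarith, le_rfl⟩ hl1m
  · -- psi l1 = psi l2
    have h := psi_l1_eq_l2 (l1:=l1) (d:=D) (r:=R) hl1 hd
    rw [el2] at h
    exact h
  · -- max at 0 on [0,L]
    rintro x ⟨hx0, hxL⟩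
    rcases le_or_gt x (l1 + D/2) with h | h
    · exact hanti.antitoneOn ⟨le_rfl, by linarith⟩ ⟨hx0, h⟩ hx0
    · have h1 : psi l1 D R x ≤ psi l1 D R (l1 + D + R) :=
        hmono.monotoneOn ⟨by linarith, by linarith⟩ ⟨by linarith, le_rfl⟩ (by linarith)
      have h2 := psi_0_eq_L (l1:=l1) (d:=D) (r:=R) hl1 hd hr
      linarith
  · -- psi 0 = psi L
    have h := psi_0_eq_L (l1:=l1) (d:=D) (r:=R) hl1 hd hr
    rw [eL] at h
    exact h
  · -- C5
    have h1 := psi_0_val (l1:=l1) (d:=D) (r:=R) hl1 hd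
    have h2 : psi l1 D R m = cB l1 D R := hpsim
    rw [h1, h2]
    unfold cB at *
    linarith
end

section
/- Let T, L > 0, let φ ∈ C^∞([0,T]×[0,L]) and s ∈ ℝ. Let u ∈ C^∞([0,T]×[0,L]) satisfy u(t,0) = u(t,L) = u_x(t,L) = 0 for all t ∈ [0,T], and u(0,x) = u(T,x) = 0 for all x ∈ [0,L]. Set α := s(φ_t + φ_xxx) + s³φ_x³, M1u := 3s(φ_x u_xx + φ_xx u_x) + α u, and M2u := u_t + u_xxx + 3s²(φ_x² u_x + φ_x φ_xx u). Then 2∫₀^T∫₀^L (M1u)(M2u) dx dt = ∫₀^T∫₀^L [ −(α_t + α_xxx + 3s²φ_x²α_x) + 9s³((φ_x²φ_xx)_xx − (φ_x φ_xx²)_x) ] u² dx dt + ∫₀^T∫₀^L [ 3α_x − 27s³φ_x²φ_xx + 3s(φ_xt + φ_xxxx) ] u_x² dx dt − 9s∫₀^T∫₀^L φ_xx u_xx² dx dt + ∫₀^T [ 3s φ_x u_xx² + (9s³φ_x³ − 3sφ_xxx − α) u_x² + 6s φ_xx u_x u_xx ] evaluated from x = 0 to x = L, dt. -/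
/-- Partial derivative in the space variable (second argument). -/
noncomputable def pdx (f : ℝ → ℝ → ℝ) : ℝ → ℝ → ℝ := fun t x => deriv (f t) x

/-- Partial derivative in the time variable (first argument). -/
noncomputable def pdt (f : ℝ → ℝ → ℝ) : ℝ → ℝ → ℝ := fun t x => deriv (fun s => f s x) t


open Function MeasureTheory Set

section aux


variable {f : ℝ → ℝ → ℝ}

lemma htop1 : (⊤ : ℕ∞) + 1 ≤ ((⊤ : ℕ∞) : WithTop ℕ∞) := by
  exact_mod_cast le_top

lemma hone1 : ((⊤ : ℕ∞) : WithTop ℕ∞) ≠ 0 := by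
  exact_mod_cast ENat.top_ne_zero

lemma diff_slice_x (hf : ContDiff ℝ (⊤ : ℕ∞) (uncurry f)) (t : ℝ) :
    Differentiable ℝ (f t) := by
  have : f t = (uncurry f) ∘ (fun y => (t, y)) := rfl
  rw [this]
  exact (hf.differentiable hone1).comp ((differentiable_const t).prodMk differentiable_id)

lemma diff_slice_t (hf : ContDiff ℝ (⊤ : ℕ∞) (uncurry f)) (x : ℝ) :
    Differentiable ℝ (fun τ => f τ x) := by
  have : (fun τ => f τ x) = (uncurry f) ∘ (fun τ => (τ, x)) := rfl
  rw [this]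
  exact (hf.differentiable hone1).comp (differentiable_id.prodMk (differentiable_const x))

lemma hasDerivAt_slice_x (hf : ContDiff ℝ (⊤ : ℕ∞) (uncurry f)) (t x : ℝ) :
    HasDerivAt (f t) (pdx f t x) x :=
  (diff_slice_x hf t x).hasDerivAt

lemma hasDerivAt_slice_t (hf : ContDiff ℝ (⊤ : ℕ∞) (uncurry f)) (t x : ℝ) :
    HasDerivAt (fun τ => f τ x) (pdt f t x) t :=
  (diff_slice_t hf x t).hasDerivAt

lemma pdx_eq_fderiv (hf : ContDiff ℝ (⊤ : ℕ∞) (uncurry f)) (t x : ℝ) :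
    pdx f t x = fderiv ℝ (uncurry f) (t, x) (0, 1) := by
  have h1 : HasDerivAt (fun y => ((t : ℝ), y)) ((0 : ℝ), (1 : ℝ)) x := by
    exact (hasDerivAt_const x t).prodMk (hasDerivAt_id x)
  have h2 : HasFDerivAt (uncurry f) (fderiv ℝ (uncurry f) (t, x)) (t, x) :=
    ((hf.differentiable hone1) (t, x)).hasFDerivAt
  exact (h2.comp_hasDerivAt x h1).deriv

lemma pdt_eq_fderiv (hf : ContDiff ℝ (⊤ : ℕ∞) (uncurry f)) (t x : ℝ) :
    pdt f t x = fderiv ℝ (uncurry f) (t, x) (1, 0) := by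
  have h1 : HasDerivAt (fun τ => (τ, (x : ℝ))) ((1 : ℝ), (0 : ℝ)) t := by
    exact (hasDerivAt_id t).prodMk (hasDerivAt_const t x)
  have h2 : HasFDerivAt (uncurry f) (fderiv ℝ (uncurry f) (t, x)) (t, x) :=
    ((hf.differentiable hone1) (t, x)).hasFDerivAt
  exact (h2.comp_hasDerivAt t h1).deriv

lemma contDiff_pdx (hf : ContDiff ℝ (⊤ : ℕ∞) (uncurry f)) :
    ContDiff ℝ (⊤ : ℕ∞) (uncurry (pdx f)) := by
  have he : uncurry (pdx f) = fun p : ℝ × ℝ => fderiv ℝ (uncurry f) p (0, 1) := by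
    funext p
    exact pdx_eq_fderiv hf p.1 p.2
  rw [he]
  exact (hf.fderiv_right htop1).clm_apply contDiff_const

lemma contDiff_pdt (hf : ContDiff ℝ (⊤ : ℕ∞) (uncurry f)) :
    ContDiff ℝ (⊤ : ℕ∞) (uncurry (pdt f)) := by
  have he : uncurry (pdt f) = fun p : ℝ × ℝ => fderiv ℝ (uncurry f) p (1, 0) := by
    funext p
    exact pdt_eq_fderiv hf p.1 p.2
  rw [he]
  exact (hf.fderiv_right htop1).clm_apply contDiff_const

lemma pdx_pdt_comm (hf : ContDiff ℝ (⊤ : ℕ∞) (uncurry f)) (t x : ℝ) :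
    pdx (pdt f) t x = pdt (pdx f) t x := by
  have hd2 : Differentiable ℝ (fderiv ℝ (uncurry f)) :=
    (hf.fderiv_right htop1).differentiable hone1
  have key : ∀ v w : ℝ × ℝ,
      fderiv ℝ (fun p => fderiv ℝ (uncurry f) p v) (t, x) w
        = fderiv ℝ (fderiv ℝ (uncurry f)) (t, x) w v := by
    intro v w
    have h1 : HasFDerivAt (fderiv ℝ (uncurry f))
        (fderiv ℝ (fderiv ℝ (uncurry f)) (t, x)) (t, x) := (hd2 _).hasFDerivAt
    have h2 := (ContinuousLinearMap.apply ℝ ℝ v).hasFDerivAt.comp (t, x) h1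
    have h3 : fderiv ℝ (fun p => fderiv ℝ (uncurry f) p v) (t, x)
        = (ContinuousLinearMap.apply ℝ ℝ v).comp (fderiv ℝ (fderiv ℝ (uncurry f)) (t, x)) :=
      h2.fderiv
    rw [h3]
    rfl
  have hsymm : fderiv ℝ (fderiv ℝ (uncurry f)) (t, x) (0, 1) (1, 0)
      = fderiv ℝ (fderiv ℝ (uncurry f)) (t, x) (1, 0) (0, 1) := by
    have h2le : minSmoothness ℝ 2 ≤ ((⊤:ℕ∞) : WithTop ℕ∞) := by
      rw [minSmoothness_of_isRCLikeNormedField]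
      rw [(by norm_cast : (2 : WithTop ℕ∞) = ((2:ℕ∞) : WithTop ℕ∞))]
      exact WithTop.coe_le_coe.mpr le_top
    exact (hf.contDiffAt (x := ((t,x) : ℝ × ℝ))).isSymmSndFDerivAt h2le (0, 1) (1, 0)
  have e1 : uncurry (pdt f) = fun p : ℝ × ℝ => fderiv ℝ (uncurry f) p (1, 0) := by
    funext p; exact pdt_eq_fderiv hf p.1 p.2
  have e2 : uncurry (pdx f) = fun p : ℝ × ℝ => fderiv ℝ (uncurry f) p (0, 1) := by
    funext p; exact pdx_eq_fderiv hf p.1 p.2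
  rw [pdx_eq_fderiv (contDiff_pdt hf) t x, pdt_eq_fderiv (contDiff_pdx hf) t x, e1, e2,
    key (1, 0) (0, 1), key (0, 1) (1, 0), hsymm]

end aux

noncomputable def Afun (s : ℝ) (φ u α : ℝ → ℝ → ℝ) : ℝ → ℝ → ℝ := fun t x =>
  ((α t x * (u t x ^ 2)) - (((3 * s) * pdx φ t x) * (pdx u t x ^ 2)))

noncomputable def Cfun (s : ℝ) (φ u α : ℝ → ℝ → ℝ) : ℝ → ℝ → ℝ := fun t x =>
  (((((((((((((((3 * s) * pdx φ t x) * (pdx (pdx u) t x ^ 2)) + (((9 * s ^ 3) * (pdx φ t x ^ 3)) * (pdx u t x ^ 2))) + (((((18 * s ^ 3) * (pdx φ t x ^ 2)) * pdx (pdx φ) t x) * u t x) * pdx u t x)) - (((9 * s ^ 3) * ((((2) * pdx φ t x) * (pdx (pdx φ) t x ^ 2)) + ((pdx φ t x ^ 2) * pdx (pdx (pdx φ)) t x))) * (u t x ^ 2))) + ((((6 * s) * pdx (pdx φ) t x) * pdx u t x) * pdx (pdx u) t x)) - (((3 * s) * pdx (pdx (pdx φ)) t x) * (pdx u t x ^ 2)))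 + ((((9 * s ^ 3) * pdx φ t x) * (pdx (pdx φ) t x ^ 2)) * (u t x ^ 2))) + ((((2) * α t x) * u t x) * pdx (pdx u) t x)) - (α t x * (pdx u t x ^ 2))) - ((((2) * pdx α t x) * u t x) * pdx u t x)) + (pdx (pdx α) t x * (u t x ^ 2))) + ((((3 * s ^ 2) * (pdx φ t x ^ 2)) * α t x) * (u t x ^ 2))) + ((((6 * s) * pdx φ t x) * pdx u t x) * pdt u t x))

noncomputable def G1fun (s : ℝ) (φ u α : ℝ → ℝ → ℝ) : ℝ → ℝ → ℝ := fun t x =>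
  ((((0) - ((pdt α t x + pdx (pdx (pdx α)) t x) + (((3 * s ^ 2) * (pdx φ t x ^ 2)) * pdx α t x))) + ((9 * s ^ 3) * (((((2) * (pdx (pdx φ) t x ^ 3)) + ((((6) * pdx φ t x) * pdx (pdx φ) t x) * pdx (pdx (pdx φ)) t x)) + ((pdx φ t x ^ 2) * pdx (pdx (pdx (pdx φ))) t x)) - ((pdx (pdx φ) t x ^ 3) + ((((2) * pdx φ t x) * pdx (pdx φ) t x) * pdx (pdx (pdx φ)) t x))))) * (u t x ^ 2))

noncomputable def G2fun (s : ℝ) (φ u α : ℝ → ℝ → ℝ) : ℝ → ℝ → ℝ := fun t x =>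
  (((((3) * pdx α t x) - (((27 * s ^ 3) * (pdx φ t x ^ 2)) * pdx (pdx φ) t x)) + ((3 * s) * (pdt (pdx φ) t x + pdx (pdx (pdx (pdx φ))) t x))) * (pdx u t x ^ 2))

noncomputable def G3fun (φ u : ℝ → ℝ → ℝ) : ℝ → ℝ → ℝ := fun t x =>
  (pdx (pdx φ) t x * (pdx (pdx u) t x ^ 2))

section lemmas

variable (s : ℝ) (φ u α : ℝ → ℝ → ℝ)

lemma contDiff_Afun (hφ : ContDiff ℝ (⊤ : ℕ∞) (uncurry φ)) (hu : ContDiff ℝ (⊤ : ℕ∞) (uncurry u))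
    (hα : ContDiff ℝ (⊤ : ℕ∞) (uncurry α)) : ContDiff ℝ (⊤ : ℕ∞) (uncurry (Afun s φ u α)) := by
  show ContDiff ℝ (⊤ : ℕ∞) (fun p : ℝ × ℝ => ((α p.1 p.2 * (u p.1 p.2 ^ 2)) - (((3 * s) * pdx φ p.1 p.2) * (pdx u p.1 p.2 ^ 2))))
  exact ((hα.mul (hu.pow 2)).sub ((contDiff_const.mul (contDiff_pdx hφ)).mul ((contDiff_pdx hu).pow 2)))

lemma contDiff_Cfun (hφ : ContDiff ℝ (⊤ : ℕ∞) (uncurry φ)) (hu : ContDiff ℝ (⊤ : ℕ∞) (uncurry u))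
    (hα : ContDiff ℝ (⊤ : ℕ∞) (uncurry α)) : ContDiff ℝ (⊤ : ℕ∞) (uncurry (Cfun s φ u α)) := by
  show ContDiff ℝ (⊤ : ℕ∞) (fun p : ℝ × ℝ => (((((((((((((((3 * s) * pdx φ p.1 p.2) * (pdx (pdx u) p.1 p.2 ^ 2)) + (((9 * s ^ 3) * (pdx φ p.1 p.2 ^ 3)) * (pdx u p.1 p.2 ^ 2))) + (((((18 * s ^ 3) * (pdx φ p.1 p.2 ^ 2)) * pdx (pdx φ) p.1 p.2) * u p.1 p.2) * pdx u p.1 p.2)) - (((9 * s ^ 3) * ((((2) * pdx φ p.1 p.2) * (pdx (pdx φ) p.1 p.2 ^ 2)) + ((pdx φ p.1 p.2 ^ 2) * pdx (pdx (pdx φ)) p.1 p.2))) * (u p.1 p.2 ^ 2))) + ((((6 * s) * pdx (pdx φ) p.1 p.2) * pdx u p.1 p.2) * pdx (pdx u) p.1 p.2)) - (((3 * s) * pdx (pdx (pdx φ)) p.1 p.2) * (pdx u p.1 p.2 ^ 2))) + ((((9 * s ^ 3) * pdx φ p.1 p.2) * (pdx (pdx φ) p.1 p.2 ^ 2)) *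 (u p.1 p.2 ^ 2))) + ((((2) * α p.1 p.2) * u p.1 p.2) * pdx (pdx u) p.1 p.2)) - (α p.1 p.2 * (pdx u p.1 p.2 ^ 2))) - ((((2) * pdx α p.1 p.2) * u p.1 p.2) * pdx u p.1 p.2)) + (pdx (pdx α) p.1 p.2 * (u p.1 p.2 ^ 2))) + ((((3 * s ^ 2) * (pdx φ p.1 p.2 ^ 2)) * α p.1 p.2) * (u p.1 p.2 ^ 2))) + ((((6 * s) * pdx φ p.1 p.2) * pdx u p.1 p.2) * pdt u p.1 p.2)))
  exact ((((((((((((((contDiff_const.mul (contDiff_pdx hφ)).mul ((contDiff_pdx (contDiff_pdx hu)).pow 2)).add ((contDiff_const.mul ((contDiff_pdx hφ).pow 3)).mul ((contDiff_pdx hu).pow 2))).add ((((contDiff_const.mul ((contDiff_pdx hφ).pow 2)).mul (contDiff_pdx (contDiff_pdx hφ))).mul hu).mul (contDiff_pdx hu))).sub ((contDiff_const.mul (((contDiff_const.mul (contDiff_pdx hφ)).mul ((contDiff_pdx (contDiff_pdx hφ)).pow 2)).add (((contDiff_pdx hφ).pow 2).mul (contDiff_pdx (contDiff_pdx (contDiff_pdx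 hφ)))))).mul (hu.pow 2))).add (((contDiff_const.mul (contDiff_pdx (contDiff_pdx hφ))).mul (contDiff_pdx hu)).mul (contDiff_pdx (contDiff_pdx hu)))).sub ((contDiff_const.mul (contDiff_pdx (contDiff_pdx (contDiff_pdx hφ)))).mul ((contDiff_pdx hu).pow 2))).add (((contDiff_const.mul (contDiff_pdx hφ)).mul ((contDiff_pdx (contDiff_pdx hφ)).pow 2)).mul (hu.pow 2))).add (((contDiff_const.mul hα).mul hu).mul (contDiff_pdx (contDiff_pdx hu)))).sub (hα.mul ((contDiff_pdx hu).pow 2))).sub (((contDiff_const.mul (contDiff_pdx hα)).mul hu).mul (contDiff_pdx hu))).add ((contDiff_pdx (contDiff_pdx hα)).mul (hu.pow 2))).add (((contDiff_const.mul ((contDiff_pdx hφ).pow 2)).mul hα).mul (hu.pow 2))).add (((contDiff_const.mul (contDiff_pdx hφ)).mul (contDiff_pdx hu)).mul (contDiff_pdt hu)))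

lemma contDiff_G1fun (hφ : ContDiff ℝ (⊤ : ℕ∞) (uncurry φ)) (hu : ContDiff ℝ (⊤ : ℕ∞) (uncurry u))
    (hα : ContDiff ℝ (⊤ : ℕ∞) (uncurry α)) : ContDiff ℝ (⊤ : ℕ∞) (uncurry (G1fun s φ u α)) := by
  show ContDiff ℝ (⊤ : ℕ∞) (fun p : ℝ × ℝ => ((((0) - ((pdt α p.1 p.2 + pdx (pdx (pdx α)) p.1 p.2) + (((3 * s ^ 2) * (pdx φ p.1 p.2 ^ 2)) * pdx α p.1 p.2))) + ((9 * s ^ 3) * (((((2) * (pdx (pdx φ) p.1 p.2 ^ 3)) + ((((6) * pdx φ p.1 p.2) * pdx (pdx φ) p.1 p.2) * pdx (pdx (pdx φ)) p.1 p.2)) + ((pdx φ p.1 p.2 ^ 2) * pdx (pdx (pdx (pdx φ))) p.1 p.2)) - ((pdx (pdx φ) p.1 p.2 ^ 3) + ((((2) * pdx φ p.1 p.2) * pdx (pdx φ) p.1 p.2) * pdx (pdx (pdx φ)) p.1 p.2))))) * (u p.1 p.2 ^ 2)))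
  exact (((contDiff_const.sub (((contDiff_pdt hα).add (contDiff_pdx (contDiff_pdx (contDiff_pdx hα)))).add ((contDiff_const.mul ((contDiff_pdx hφ).pow 2)).mul (contDiff_pdx hα)))).add (contDiff_const.mul ((((contDiff_const.mul ((contDiff_pdx (contDiff_pdx hφ)).pow 3)).add (((contDiff_const.mul (contDiff_pdx hφ)).mul (contDiff_pdx (contDiff_pdx hφ))).mul (contDiff_pdx (contDiff_pdx (contDiff_pdx hφ))))).add (((contDiff_pdx hφ).pow 2).mul (contDiff_pdx (contDiff_pdx (contDiff_pdx (contDiff_pdx hφ)))))).sub (((contDiff_pdx (contDiff_pdx hφ)).pow 3).add (((contDiff_const.mul (contDiff_pdx hφ)).mul (contDiff_pdx (contDiff_pdx hφ))).mul (contDiff_pdx (contDiff_pdx (contDiff_pdx hφ)))))))).mul (hu.pow 2))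

lemma contDiff_G2fun (hφ : ContDiff ℝ (⊤ : ℕ∞) (uncurry φ)) (hu : ContDiff ℝ (⊤ : ℕ∞) (uncurry u))
    (hα : ContDiff ℝ (⊤ : ℕ∞) (uncurry α)) : ContDiff ℝ (⊤ : ℕ∞) (uncurry (G2fun s φ u α)) := by
  show ContDiff ℝ (⊤ : ℕ∞) (fun p : ℝ × ℝ => (((((3) * pdx α p.1 p.2) - (((27 * s ^ 3) * (pdx φ p.1 p.2 ^ 2)) * pdx (pdx φ) p.1 p.2)) + ((3 * s) * (pdt (pdx φ) p.1 p.2 + pdx (pdx (pdx (pdx φ))) p.1 p.2))) * (pdx u p.1 p.2 ^ 2)))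
  exact ((((contDiff_const.mul (contDiff_pdx hα)).sub ((contDiff_const.mul ((contDiff_pdx hφ).pow 2)).mul (contDiff_pdx (contDiff_pdx hφ)))).add (contDiff_const.mul ((contDiff_pdt (contDiff_pdx hφ)).add (contDiff_pdx (contDiff_pdx (contDiff_pdx (contDiff_pdx hφ))))))).mul ((contDiff_pdx hu).pow 2))

lemma contDiff_G3fun (hφ : ContDiff ℝ (⊤ : ℕ∞) (uncurry φ)) (hu : ContDiff ℝ (⊤ : ℕ∞) (uncurry u)) :
    ContDiff ℝ (⊤ : ℕ∞) (uncurry (G3fun φ u)) := by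
  show ContDiff ℝ (⊤ : ℕ∞) (fun p : ℝ × ℝ => (pdx (pdx φ) p.1 p.2 * (pdx (pdx u) p.1 p.2 ^ 2)))
  exact ((contDiff_pdx (contDiff_pdx hφ)).mul ((contDiff_pdx (contDiff_pdx hu)).pow 2))

lemma pdx_Cfun (hφ : ContDiff ℝ (⊤ : ℕ∞) (uncurry φ)) (hu : ContDiff ℝ (⊤ : ℕ∞) (uncurry u))
    (hα : ContDiff ℝ (⊤ : ℕ∞) (uncurry α)) (t x : ℝ) :
    pdx (Cfun s φ u α) t x =
      ((((((((((((((((3 * s) * pdx (pdx φ) t x) * (pdx (pdx u) t x ^ 2)) + (((3 * s) * pdx φ t x) * (((2) * (pdx (pdx u) t x ^ 1)) * pdx (pdx (pdx u)) t x))) + ((((9 * s ^ 3) * (((3) * (pdx φ t x ^ 2)) * pdx (pdx φ) t x)) * (pdx u t x ^ 2)) + (((9 * s ^ 3) * (pdx φ t x ^ 3)) * (((2) * (pdx u t x ^ 1)) * pdx (pdx u) t x)))) + ((((((((18 * s ^ 3) * (((2) * (pdx φ t x ^ 1)) * pdx (pdx φ) t x)) * pdx (pdx φ) t x) + (((18 *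 s ^ 3) * (pdx φ t x ^ 2)) * pdx (pdx (pdx φ)) t x)) * u t x) + ((((18 * s ^ 3) * (pdx φ t x ^ 2)) * pdx (pdx φ) t x) * pdx u t x)) * pdx u t x) + (((((18 * s ^ 3) * (pdx φ t x ^ 2)) * pdx (pdx φ) t x) * u t x) * pdx (pdx u) t x))) - ((((9 * s ^ 3) * (((((2) * pdx (pdx φ) t x) * (pdx (pdx φ) t x ^ 2)) + (((2) * pdx φ t x) * (((2) * (pdx (pdx φ) t x ^ 1)) * pdx (pdx (pdx φ)) t x))) + (((((2) * (pdx φ t x ^ 1)) * pdx (pdx φ) t x) * pdx (pdx (pdx φ)) t x) + ((pdx φ t x ^ 2) * pdx (pdx (pdx (pdx φ))) t x)))) * (u t x ^ 2)) + (((9 * s ^ 3) * ((((2) * pdx φ t x) * (pdx (pdx φ) t x ^ 2)) + ((pdx φ t x ^ 2) * pdx (pdx (pdx φ)) t x))) * (((2) * (u t x ^ 1)) * pdx u t x)))) + ((((((6 * s) * pdx (pdx (pdx φ)) t x) * pdx u t x) + (((6 * s) * pdx (pdx φ) t x) * pdx (pdx u) t x)) * pdx (pdx u) t x) + ((((6 *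 s) * pdx (pdx φ) t x) * pdx u t x) * pdx (pdx (pdx u)) t x))) - ((((3 * s) * pdx (pdx (pdx (pdx φ))) t x) * (pdx u t x ^ 2)) + (((3 * s) * pdx (pdx (pdx φ)) t x) * (((2) * (pdx u t x ^ 1)) * pdx (pdx u) t x)))) + ((((((9 * s ^ 3) * pdx (pdx φ) t x) * (pdx (pdx φ) t x ^ 2)) + (((9 * s ^ 3) * pdx φ t x) * (((2) * (pdx (pdx φ) t x ^ 1)) * pdx (pdx (pdx φ)) t x))) * (u t x ^ 2)) + ((((9 * s ^ 3) * pdx φ t x) * (pdx (pdx φ) t x ^ 2)) * (((2) * (u t x ^ 1)) * pdx u t x)))) + ((((((2) * pdx α t x) * u t x) + (((2) * α t x) * pdx u t x)) * pdx (pdx u) t x) + ((((2) * α t x) * u t x) * pdx (pdx (pdx u)) t x))) - ((pdx α t x * (pdx u t x ^ 2)) + (α t x * (((2) * (pdx u t x ^ 1)) * pdx (pdx u) t x)))) - ((((((2) * pdx (pdx α) t x) * u t x) + (((2) * pdx α t x) * pdx u t x)) * pdx u t x) + ((((2) * pdx α t x) * u t x) * pdx (pdx u) t x))) + ((pdx (pdx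 (pdx α)) t x * (u t x ^ 2)) + (pdx (pdx α) t x * (((2) * (u t x ^ 1)) * pdx u t x)))) + ((((((3 * s ^ 2) * (((2) * (pdx φ t x ^ 1)) * pdx (pdx φ) t x)) * α t x) + (((3 * s ^ 2) * (pdx φ t x ^ 2)) * pdx α t x)) * (u t x ^ 2)) + ((((3 * s ^ 2) * (pdx φ t x ^ 2)) * α t x) * (((2) * (u t x ^ 1)) * pdx u t x)))) + ((((((6 * s) * pdx (pdx φ) t x) * pdx u t x) + (((6 * s) * pdx φ t x) * pdx (pdx u) t x)) * pdt u t x) + ((((6 * s) * pdx φ t x) * pdx u t x) * pdx (pdt u) t x))) := by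
  have H : HasDerivAt (fun y => (((((((((((((((3 * s) * pdx φ t y) * (pdx (pdx u) t y ^ 2)) + (((9 * s ^ 3) * (pdx φ t y ^ 3)) * (pdx u t y ^ 2))) + (((((18 * s ^ 3) * (pdx φ t y ^ 2)) * pdx (pdx φ) t y) * u t y) * pdx u t y)) - (((9 * s ^ 3) * ((((2) * pdx φ t y) * (pdx (pdx φ) t y ^ 2)) + ((pdx φ t y ^ 2) * pdx (pdx (pdx φ)) t y))) * (u t y ^ 2))) + ((((6 * s) * pdx (pdx φ) t y) * pdx u t y) * pdx (pdx u) t y)) - (((3 * s) * pdx (pdx (pdx φ)) t y) * (pdx u t y ^ 2))) + ((((9 * s ^ 3) * pdx φ t y) * (pdx (pdx φ) t y ^ 2)) * (u t y ^ 2))) + ((((2) * α t y) * u t y) * pdx (pdx u) t y)) - (α t y * (pdx u t y ^ 2))) - ((((2) * pdx α t y) * u t y) * pdx u t y)) + (pdx (pdx α) t y * (u t y ^ 2))) + ((((3 * s ^ 2) * (pdx φ t y ^ 2)) * α t y) * (u t y ^ 2))) + ((((6 * s) * pdx φ t y) * pdx u t y) * pdt u t y)))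
      (((((((((((((((((3 * s) * pdx (pdx φ) t x) * (pdx (pdx u) t x ^ 2)) + (((3 * s) * pdx φ t x) * (((2) * (pdx (pdx u) t x ^ 1)) * pdx (pdx (pdx u)) t x))) + ((((9 * s ^ 3) * (((3) * (pdx φ t x ^ 2)) * pdx (pdx φ) t x)) * (pdx u t x ^ 2)) + (((9 * s ^ 3) * (pdx φ t x ^ 3)) * (((2) * (pdx u t x ^ 1)) * pdx (pdx u) t x)))) + ((((((((18 * s ^ 3) * (((2) * (pdx φ t x ^ 1)) * pdx (pdx φ) t x)) * pdx (pdx φ) t x) + (((18 * s ^ 3) * (pdx φ t x ^ 2)) * pdx (pdx (pdx φ)) t x)) * u t x) + ((((18 * s ^ 3) * (pdx φ t x ^ 2)) * pdx (pdx φ) t x) * pdx u t x)) * pdx u t x) + (((((18 * s ^ 3) * (pdx φ t x ^ 2)) * pdx (pdx φ) t x) * u t x) * pdx (pdx u) t x))) - ((((9 * s ^ 3) * (((((2) * pdx (pdx φ) t x) * (pdx (pdx φ) t x ^ 2)) + (((2) * pdx φ t x) * (((2) * (pdx (pdx φ) t x ^ 1)) * pdx (pdx (pdx φ)) t x))) +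 (((((2) * (pdx φ t x ^ 1)) * pdx (pdx φ) t x) * pdx (pdx (pdx φ)) t x) + ((pdx φ t x ^ 2) * pdx (pdx (pdx (pdx φ))) t x)))) * (u t x ^ 2)) + (((9 * s ^ 3) * ((((2) * pdx φ t x) * (pdx (pdx φ) t x ^ 2)) + ((pdx φ t x ^ 2) * pdx (pdx (pdx φ)) t x))) * (((2) * (u t x ^ 1)) * pdx u t x)))) + ((((((6 * s) * pdx (pdx (pdx φ)) t x) * pdx u t x) + (((6 * s) * pdx (pdx φ) t x) * pdx (pdx u) t x)) * pdx (pdx u) t x) + ((((6 * s) * pdx (pdx φ) t x) * pdx u t x) * pdx (pdx (pdx u)) t x))) - ((((3 * s) * pdx (pdx (pdx (pdx φ))) t x) * (pdx u t x ^ 2)) + (((3 * s) * pdx (pdx (pdx φ)) t x) * (((2) * (pdx u t x ^ 1)) * pdx (pdx u) t x)))) + ((((((9 * s ^ 3) * pdx (pdx φ) t x) * (pdx (pdx φ) t x ^ 2)) + (((9 * s ^ 3) * pdx φ t x) * (((2) * (pdx (pdx φ) t x ^ 1)) * pdx (pdx (pdx φ)) t x))) * (u t x ^ 2)) + ((((9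 * s ^ 3) * pdx φ t x) * (pdx (pdx φ) t x ^ 2)) * (((2) * (u t x ^ 1)) * pdx u t x)))) + ((((((2) * pdx α t x) * u t x) + (((2) * α t x) * pdx u t x)) * pdx (pdx u) t x) + ((((2) * α t x) * u t x) * pdx (pdx (pdx u)) t x))) - ((pdx α t x * (pdx u t x ^ 2)) + (α t x * (((2) * (pdx u t x ^ 1)) * pdx (pdx u) t x)))) - ((((((2) * pdx (pdx α) t x) * u t x) + (((2) * pdx α t x) * pdx u t x)) * pdx u t x) + ((((2) * pdx α t x) * u t x) * pdx (pdx u) t x))) + ((pdx (pdx (pdx α)) t x * (u t x ^ 2)) + (pdx (pdx α) t x * (((2) * (u t x ^ 1)) * pdx u t x)))) + ((((((3 * s ^ 2) * (((2) * (pdx φ t x ^ 1)) * pdx (pdx φ) t x)) * α t x) + (((3 * s ^ 2) * (pdx φ t x ^ 2)) * pdx α t x)) * (u t x ^ 2)) + ((((3 * s ^ 2) * (pdx φ t x ^ 2)) * α t x) * (((2) * (u t x ^ 1)) * pdx u t x)))) + ((((((6 * s) * pdx (pdx φ) t x) * pdx u t x) + (((6 * s) * pdx φ t x) * pdx (pdx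 u) t x)) * pdt u t x) + ((((6 * s) * pdx φ t x) * pdx u t x) * pdx (pdt u) t x)))) x := by
    have H0 := ((((((((((((((HasDerivAt.const_mul (3 * s) (hasDerivAt_slice_x (contDiff_pdx hφ) t x)).mul ((hasDerivAt_slice_x (contDiff_pdx (contDiff_pdx hu)) t x).pow 2)).add ((HasDerivAt.const_mul (9 * s ^ 3) ((hasDerivAt_slice_x (contDiff_pdx hφ) t x).pow 3)).mul ((hasDerivAt_slice_x (contDiff_pdx hu) t x).pow 2))).add ((((HasDerivAt.const_mul (18 * s ^ 3) ((hasDerivAt_slice_x (contDiff_pdx hφ) t x).pow 2)).mul (hasDerivAt_slice_x (contDiff_pdx (contDiff_pdx hφ)) t x)).mul (hasDerivAt_slice_x hu t x)).mul (hasDerivAt_slice_x (contDiff_pdx hu) t x))).sub ((HasDerivAt.const_mul (9 * s ^ 3) (((HasDerivAt.const_mul (2) (hasDerivAt_slice_x (contDiff_pdx hφ) t x)).mul ((hasDerivAt_slice_x (contDiff_pdx (contDiff_pdx hφ)) t x).pow 2)).add (((hasDerivAt_slice_x (contDiff_pdx hφ) t x).pow 2).mul (hasDerivAt_slice_x (contDiff_pdx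 (contDiff_pdx (contDiff_pdx hφ))) t x)))).mul ((hasDerivAt_slice_x hu t x).pow 2))).add (((HasDerivAt.const_mul (6 * s) (hasDerivAt_slice_x (contDiff_pdx (contDiff_pdx hφ)) t x)).mul (hasDerivAt_slice_x (contDiff_pdx hu) t x)).mul (hasDerivAt_slice_x (contDiff_pdx (contDiff_pdx hu)) t x))).sub ((HasDerivAt.const_mul (3 * s) (hasDerivAt_slice_x (contDiff_pdx (contDiff_pdx (contDiff_pdx hφ))) t x)).mul ((hasDerivAt_slice_x (contDiff_pdx hu) t x).pow 2))).add (((HasDerivAt.const_mul (9 * s ^ 3) (hasDerivAt_slice_x (contDiff_pdx hφ) t x)).mul ((hasDerivAt_slice_x (contDiff_pdx (contDiff_pdx hφ)) t x).pow 2)).mul ((hasDerivAt_slice_x hu t x).pow 2))).add (((HasDerivAt.const_mul (2) (hasDerivAt_slice_x hα t x)).mul (hasDerivAt_slice_x hu t x)).mul (hasDerivAt_slice_x (contDiff_pdx (contDiff_pdx hu)) t x))).sub ((hasDerivAt_slice_x hα t x).mul ((hasDerivAt_slice_x (contDiff_pdx hu) t x).pow 2))).sub (((HasDerivAt.const_mul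 (2) (hasDerivAt_slice_x (contDiff_pdx hα) t x)).mul (hasDerivAt_slice_x hu t x)).mul (hasDerivAt_slice_x (contDiff_pdx hu) t x))).add ((hasDerivAt_slice_x (contDiff_pdx (contDiff_pdx hα)) t x).mul ((hasDerivAt_slice_x hu t x).pow 2))).add (((HasDerivAt.const_mul (3 * s ^ 2) ((hasDerivAt_slice_x (contDiff_pdx hφ) t x).pow 2)).mul (hasDerivAt_slice_x hα t x)).mul ((hasDerivAt_slice_x hu t x).pow 2))).add (((HasDerivAt.const_mul (6 * s) (hasDerivAt_slice_x (contDiff_pdx hφ) t x)).mul (hasDerivAt_slice_x (contDiff_pdx hu) t x)).mul (hasDerivAt_slice_x (contDiff_pdt hu) t x)))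
    refine H0.congr_deriv ?_
    simp only [Pi.pow_apply, Pi.mul_apply, Pi.add_apply, Pi.sub_apply, Nat.cast_ofNat]
  exact H.deriv

lemma pdt_Afun (hφ : ContDiff ℝ (⊤ : ℕ∞) (uncurry φ)) (hu : ContDiff ℝ (⊤ : ℕ∞) (uncurry u))
    (hα : ContDiff ℝ (⊤ : ℕ∞) (uncurry α)) (t x : ℝ) :
    pdt (Afun s φ u α) t x =
      (((pdt α t x * (u t x ^ 2)) + (α t x * (((2) * (u t x ^ 1)) * pdt u t x))) - ((((3 * s) * pdt (pdx φ) t x) * (pdx u t x ^ 2)) + (((3 * s) * pdx φ t x) * (((2) * (pdx u t x ^ 1)) * pdt (pdx u) t x)))) := by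
  have H : HasDerivAt (fun τ => ((α τ x * (u τ x ^ 2)) - (((3 * s) * pdx φ τ x) * (pdx u τ x ^ 2))))
      ((((pdt α t x * (u t x ^ 2)) + (α t x * (((2) * (u t x ^ 1)) * pdt u t x))) - ((((3 * s) * pdt (pdx φ) t x) * (pdx u t x ^ 2)) + (((3 * s) * pdx φ t x) * (((2) * (pdx u t x ^ 1)) * pdt (pdx u) t x))))) t := by
    have H0 := (((hasDerivAt_slice_t hα t x).mul ((hasDerivAt_slice_t hu t x).pow 2)).sub ((HasDerivAt.const_mul (3 * s) (hasDerivAt_slice_t (contDiff_pdx hφ) t x)).mul ((hasDerivAt_slice_t (contDiff_pdx hu) t x).pow 2)))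
    refine H0.congr_deriv ?_
    simp only [Pi.pow_apply, Pi.mul_apply, Pi.add_apply, Pi.sub_apply, Nat.cast_ofNat]
  exact H.deriv

lemma pdx_Qfun (hφ : ContDiff ℝ (⊤ : ℕ∞) (uncurry φ)) (t x : ℝ) :
    pdx (fun t x => (pdx φ t x) ^ 2 * pdx (pdx φ) t x) t x = (((((2) * (pdx φ t x ^ 1)) * pdx (pdx φ) t x) * pdx (pdx φ) t x) + ((pdx φ t x ^ 2) * pdx (pdx (pdx φ)) t x)) := by
  have H : HasDerivAt (fun y => (pdx φ t y) ^ 2 * pdx (pdx φ) t y) ((((((2) * (pdx φ t x ^ 1)) * pdx (pdx φ) t x) * pdx (pdx φ) t x) + ((pdx φ t x ^ 2) * pdx (pdx (pdx φ)) t x))) x := by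
    have H0 := (((hasDerivAt_slice_x (contDiff_pdx hφ) t x).pow 2).mul (hasDerivAt_slice_x (contDiff_pdx (contDiff_pdx hφ)) t x))
    refine H0.congr_deriv ?_
    simp only [Pi.pow_apply, Pi.mul_apply, Pi.add_apply, Pi.sub_apply, Nat.cast_ofNat]
  exact H.deriv

lemma pdx2_Qfun (hφ : ContDiff ℝ (⊤ : ℕ∞) (uncurry φ)) (t x : ℝ) :
    pdx (pdx (fun t x => (pdx φ t x) ^ 2 * pdx (pdx φ) t x)) t x = (((((((2) * (((1) * (pdx φ t x ^ 0)) * pdx (pdx φ) t x)) * pdx (pdx φ) t x) + (((2) * (pdx φ t x ^ 1)) * pdx (pdx (pdx φ)) t x)) * pdx (pdx φ) t x) + ((((2) * (pdx φ t x ^ 1)) * pdx (pdx φ) t x) * pdx (pdx (pdx φ)) t x)) + (((((2) * (pdx φ t x ^ 1)) * pdx (pdx φ) t x) * pdx (pdx (pdx φ)) t x) + ((pdx φ t x ^ 2) * pdx (pdx (pdx (pdx φ))) t x))) := by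
  have e : (pdx (fun t x => (pdx φ t x) ^ 2 * pdx (pdx φ) t x)) t = fun y => (((((2) * (pdx φ t y ^ 1)) * pdx (pdx φ) t y) * pdx (pdx φ) t y) + ((pdx φ t y ^ 2) * pdx (pdx (pdx φ)) t y)) :=
    funext (fun y => pdx_Qfun φ hφ t y)
  show deriv ((pdx (fun t x => (pdx φ t x) ^ 2 * pdx (pdx φ) t x)) t) x = _
  rw [e]
  have H : HasDerivAt (fun y => (((((2) * (pdx φ t y ^ 1)) * pdx (pdx φ) t y) * pdx (pdx φ) t y) + ((pdx φ t y ^ 2) * pdx (pdx (pdx φ)) t y))) ((((((((2) * (((1) * (pdx φ t x ^ 0)) * pdx (pdx φ) t x)) * pdx (pdx φ) t x) + (((2) * (pdx φ t x ^ 1)) * pdx (pdx (pdx φ)) t x)) * pdx (pdx φ) t x) + ((((2) * (pdx φ t x ^ 1)) * pdx (pdx φ) t x) * pdx (pdx (pdx φ)) t x)) + (((((2) * (pdx φ t x ^ 1)) * pdx (pdx φ) t x) * pdx (pdx (pdx φ)) t x) + ((pdx φ t x ^ 2) * pdx (pdx (pdx (pdx φ))) t x)))) x := by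
    have H0 := ((((HasDerivAt.const_mul (2) ((hasDerivAt_slice_x (contDiff_pdx hφ) t x).pow 1)).mul (hasDerivAt_slice_x (contDiff_pdx (contDiff_pdx hφ)) t x)).mul (hasDerivAt_slice_x (contDiff_pdx (contDiff_pdx hφ)) t x)).add (((hasDerivAt_slice_x (contDiff_pdx hφ) t x).pow 2).mul (hasDerivAt_slice_x (contDiff_pdx (contDiff_pdx (contDiff_pdx hφ))) t x)))
    refine H0.congr_deriv ?_
    simp only [Pi.pow_apply, Pi.mul_apply, Pi.add_apply, Pi.sub_apply, Nat.cast_ofNat]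
    ring
  exact H.deriv

lemma pdx_Rfun (hφ : ContDiff ℝ (⊤ : ℕ∞) (uncurry φ)) (t x : ℝ) :
    pdx (fun t x => pdx φ t x * (pdx (pdx φ) t x) ^ 2) t x = ((pdx (pdx φ) t x * (pdx (pdx φ) t x ^ 2)) + (pdx φ t x * (((2) * (pdx (pdx φ) t x ^ 1)) * pdx (pdx (pdx φ)) t x))) := by
  have H : HasDerivAt (fun y => pdx φ t y * (pdx (pdx φ) t y) ^ 2) (((pdx (pdx φ) t x * (pdx (pdx φ) t x ^ 2)) + (pdx φ t x * (((2) * (pdx (pdx φ) t x ^ 1)) * pdx (pdx (pdx φ)) t x)))) x := by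
    have H0 := ((hasDerivAt_slice_x (contDiff_pdx hφ) t x).mul ((hasDerivAt_slice_x (contDiff_pdx (contDiff_pdx hφ)) t x).pow 2))
    refine H0.congr_deriv ?_
    simp only [Pi.pow_apply, Pi.mul_apply, Pi.add_apply, Pi.sub_apply, Nat.cast_ofNat]
  exact H.deriv

end lemmas

/-- exact computation of `2∫∫ (M1 u)(M2 u)` for the conjugated
KdV operator, with weight `φ`, parameter `s`, and `u` vanishing on the
relevant parts of the boundary of `[0,T]×[0,L]`. -/
theorem stmt_1 (T L : ℝ) (hT : 0 < T) (hL : 0 < L) (s : ℝ)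
    (φ u : ℝ → ℝ → ℝ)
    (hφ : ContDiff ℝ (⊤ : ℕ∞) (Function.uncurry φ))
    (hu : ContDiff ℝ (⊤ : ℕ∞) (Function.uncurry u))
    (hbc : ∀ t ∈ Set.Icc (0:ℝ) T, u t 0 = 0 ∧ u t L = 0 ∧ pdx u t L = 0)
    (hic : ∀ x ∈ Set.Icc (0:ℝ) L, u 0 x = 0 ∧ u T x = 0)
    (α M1 M2 B : ℝ → ℝ → ℝ)
    (hα : α = fun t x =>
      s * (pdt φ t x + pdx (pdx (pdx φ)) t x) + s ^ 3 * (pdx φ t x) ^ 3)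
    (hM1 : M1 = fun t x =>
      3 * s * (pdx φ t x * pdx (pdx u) t x + pdx (pdx φ) t x * pdx u t x) + α t x * u t x)
    (hM2 : M2 = fun t x =>
      pdt u t x + pdx (pdx (pdx u)) t x
        + 3 * s ^ 2 * ((pdx φ t x) ^ 2 * pdx u t x + pdx φ t x * pdx (pdx φ) t x * u t x))
    (hB : B = fun t x =>
      3 * s * pdx φ t x * (pdx (pdx u) t x) ^ 2
        + (9 * s ^ 3 * (pdx φ t x) ^ 3 - 3 * s * pdx (pdx (pdx φ)) t x - α t x)
            * (pdx u t x) ^ 2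
        + 6 * s * pdx (pdx φ) t x * pdx u t x * pdx (pdx u) t x) :
    2 * (∫ t in (0:ℝ)..T, ∫ x in (0:ℝ)..L, M1 t x * M2 t x) =
      (∫ t in (0:ℝ)..T, ∫ x in (0:ℝ)..L,
          (-(pdt α t x + pdx (pdx (pdx α)) t x + 3 * s ^ 2 * (pdx φ t x) ^ 2 * pdx α t x)
            + 9 * s ^ 3 *
                (pdx (pdx (fun t x => (pdx φ t x) ^ 2 * pdx (pdx φ) t x)) t x
                  - pdx (fun t x => pdx φ t x * (pdx (pdx φ) t x) ^ 2) t x)) * (u t x) ^ 2)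
        + (∫ t in (0:ℝ)..T, ∫ x in (0:ℝ)..L,
            (3 * pdx α t x - 27 * s ^ 3 * (pdx φ t x) ^ 2 * pdx (pdx φ) t x
              + 3 * s * (pdt (pdx φ) t x + pdx (pdx (pdx (pdx φ))) t x)) * (pdx u t x) ^ 2)
        - 9 * s * (∫ t in (0:ℝ)..T, ∫ x in (0:ℝ)..L, pdx (pdx φ) t x * (pdx (pdx u) t x) ^ 2)
        + ∫ t in (0:ℝ)..T, (B t L - B t 0) := by
  have hαs : ContDiff ℝ (⊤ : ℕ∞) (uncurry α) := by
    rw [hα]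
    show ContDiff ℝ (⊤ : ℕ∞) (fun p : ℝ × ℝ =>
      s * (pdt φ p.1 p.2 + pdx (pdx (pdx φ)) p.1 p.2) + s ^ 3 * (pdx φ p.1 p.2) ^ 3)
    exact (contDiff_const.mul ((contDiff_pdt hφ).add
      (contDiff_pdx (contDiff_pdx (contDiff_pdx hφ))))).add
      (contDiff_const.mul ((contDiff_pdx hφ).pow 3))
  have hCA := contDiff_Afun s φ u α hφ hu hαs
  have hCC := contDiff_Cfun s φ u α hφ hu hαs
  have hcA : Continuous (uncurry (Afun s φ u α)) := hCA.continuous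
  have hcC : Continuous (uncurry (Cfun s φ u α)) := hCC.continuous
  have hcG1 : Continuous (uncurry (G1fun s φ u α)) := (contDiff_G1fun s φ u α hφ hu hαs).continuous
  have hcG2 : Continuous (uncurry (G2fun s φ u α)) := (contDiff_G2fun s φ u α hφ hu hαs).continuous
  have hcG3 : Continuous (uncurry (G3fun φ u)) := (contDiff_G3fun φ u hφ hu).continuous
  have hcGsum : Continuous (uncurry (fun t x => G1fun s φ u α t x + G2fun s φ u α t x - 9 * s * G3fun φ u t x)) := by
    show Continuous (fun p : ℝ × ℝ => G1fun s φ u α p.1 p.2 + G2fun s φ u α p.1 p.2 - 9 * s * G3fun φ u p.1 p.2)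
    exact (hcG1.add hcG2).sub (continuous_const.mul hcG3)
  have hcDiv : Continuous (uncurry (fun t x => fderiv ℝ (uncurry (Afun s φ u α)) (t, x) (1, 0) + fderiv ℝ (uncurry (Cfun s φ u α)) (t, x) (0, 1))) := by
    show Continuous (fun p : ℝ × ℝ => fderiv ℝ (uncurry (Afun s φ u α)) p (1, 0) + fderiv ℝ (uncurry (Cfun s φ u α)) p (0, 1))
    exact (((hCA.fderiv_right htop1).clm_apply contDiff_const).continuous).add
      (((hCC.fderiv_right htop1).clm_apply contDiff_const).continuous)
  have sliceII : ∀ {g : ℝ → ℝ → ℝ}, Continuous (uncurry g) →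
      ∀ t : ℝ, IntervalIntegrable (fun x => g t x) volume 0 L :=
    fun {g} hg t => (hg.comp (Continuous.prodMk_right t)).intervalIntegrable 0 L
  have paramC : ∀ {g : ℝ → ℝ → ℝ}, Continuous (uncurry g) →
      IntervalIntegrable (fun t => ∫ x in (0:ℝ)..L, g t x) volume 0 T :=
    fun {g} hg =>
      (intervalIntegral.continuous_parametric_intervalIntegral_of_continuous' hg 0 L).intervalIntegrable 0 T
  have keyPt : ∀ t x : ℝ, 2 * (M1 t x * M2 t x) = (G1fun s φ u α t x + G2fun s φ u α t x - 9 * s * G3fun φ u t x) + (fderiv ℝ (uncurry (Afun s φ u α)) (t, x) (1, 0) + fderiv ℝ (uncurry (Cfun s φ u α)) (t, x) (0, 1)) := by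
    intro t x
    rw [← pdt_eq_fderiv hCA t x, ← pdx_eq_fderiv hCC t x,
      pdt_Afun s φ u α hφ hu hαs t x, pdx_Cfun s φ u α hφ hu hαs t x, pdx_pdt_comm hu t x]
    simp only [hM1, hM2, G1fun, G2fun, G3fun]
    ring
  have innerEq : ∀ t : ℝ, (∫ x in (0:ℝ)..L, 2 * (M1 t x * M2 t x))
      = (∫ x in (0:ℝ)..L, (G1fun s φ u α t x + G2fun s φ u α t x - 9 * s * G3fun φ u t x)) + ∫ x in (0:ℝ)..L, (fderiv ℝ (uncurry (Afun s φ u α)) (t, x) (1, 0) + fderiv ℝ (uncurry (Cfun s φ u α)) (t, x) (0, 1)) := by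
    intro t
    rw [intervalIntegral.integral_congr (g := fun x => (G1fun s φ u α t x + G2fun s φ u α t x - 9 * s * G3fun φ u t x) + (fderiv ℝ (uncurry (Afun s φ u α)) (t, x) (1, 0) + fderiv ℝ (uncurry (Cfun s φ u α)) (t, x) (0, 1))) (fun x _ => keyPt t x)]
    exact intervalIntegral.integral_add (sliceII hcGsum t) (sliceII hcDiv t)
  have dblEq : (∫ t in (0:ℝ)..T, ∫ x in (0:ℝ)..L, 2 * (M1 t x * M2 t x))
      = (∫ t in (0:ℝ)..T, ∫ x in (0:ℝ)..L, (G1fun s φ u α t x + G2fun s φ u α t x - 9 * s * G3fun φ u t x)) + ∫ t in (0:ℝ)..T, ∫ x in (0:ℝ)..L, (fderiv ℝ (uncurry (Afun s φ u α)) (t, x) (1, 0) + fderiv ℝ (uncurry (Cfun s φ u α)) (t, x) (0, 1)) := by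
    rw [intervalIntegral.integral_congr
      (g := fun t => (∫ x in (0:ℝ)..L, (G1fun s φ u α t x + G2fun s φ u α t x - 9 * s * G3fun φ u t x)) + ∫ x in (0:ℝ)..L, (fderiv ℝ (uncurry (Afun s φ u α)) (t, x) (1, 0) + fderiv ℝ (uncurry (Cfun s φ u α)) (t, x) (0, 1)))
      (fun t _ => innerEq t)]
    exact intervalIntegral.integral_add (paramC hcGsum) (paramC hcDiv)
  have hcDivP : Continuous (fun p : ℝ × ℝ => fderiv ℝ (uncurry (Afun s φ u α)) p (1, 0) + fderiv ℝ (uncurry (Cfun s φ u α)) p (0, 1)) := hcDiv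
  have hi : IntegrableOn (fun p : ℝ × ℝ => fderiv ℝ (uncurry (Afun s φ u α)) p (1, 0) + fderiv ℝ (uncurry (Cfun s φ u α)) p (0, 1)) (Set.uIcc 0 T ×ˢ Set.uIcc 0 L) volume :=
    hcDivP.continuousOn.integrableOn_compact (isCompact_uIcc.prod isCompact_uIcc)
  have hdiv := MeasureTheory.integral2_divergence_prod_of_hasFDerivAt_off_countable
      (uncurry (Afun s φ u α)) (uncurry (Cfun s φ u α))
      (fun p => fderiv ℝ (uncurry (Afun s φ u α)) p) (fun p => fderiv ℝ (uncurry (Cfun s φ u α)) p)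
      0 0 T L ∅ Set.countable_empty hcA.continuousOn hcC.continuousOn
      (fun p _ => ((hCA.differentiable hone1) p).hasFDerivAt)
      (fun p _ => ((hCC.differentiable hone1) p).hasFDerivAt) hi
  have hdiv' : (∫ t in (0:ℝ)..T, ∫ x in (0:ℝ)..L, (fderiv ℝ (uncurry (Afun s φ u α)) (t, x) (1, 0) + fderiv ℝ (uncurry (Cfun s φ u α)) (t, x) (0, 1)))
      = (((∫ t in (0:ℝ)..T, Cfun s φ u α t L) - ∫ t in (0:ℝ)..T, Cfun s φ u α t 0)
          + ∫ x in (0:ℝ)..L, Afun s φ u α T x) - ∫ x in (0:ℝ)..L, Afun s φ u α 0 x := hdiv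
  have haeL : ∀ᵐ (x : ℝ), x ≠ L := by
    rw [MeasureTheory.ae_iff]
    rw [show {a : ℝ | ¬a ≠ L} = {L} by simp]
    exact Real.volume_singleton
  have haeT : ∀ᵐ (t : ℝ), t ≠ T := by
    rw [MeasureTheory.ae_iff]
    rw [show {a : ℝ | ¬a ≠ T} = {T} by simp]
    exact Real.volume_singleton
  have hzero : ∀ τ : ℝ, (∀ y ∈ Set.Icc (0:ℝ) L, u τ y = 0) →
      (∫ x in (0:ℝ)..L, Afun s φ u α τ x) = 0 := by
    intro τ hz
    have h0 : ∀ᵐ (x : ℝ), x ∈ Set.uIoc (0:ℝ) L → Afun s φ u α τ x = (0:ℝ) := by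
      filter_upwards [haeL] with x hxne hxm
      rw [Set.uIoc_of_le hL.le] at hxm
      have hx2 : x < L := lt_of_le_of_ne hxm.2 hxne
      have hu0 : u τ x = 0 := hz x ⟨hxm.1.le, hxm.2⟩
      have hux : pdx u τ x = 0 := by
        have he : (u τ) =ᶠ[nhds x] (fun _ => (0:ℝ)) :=
          Filter.eventuallyEq_of_mem (Ioo_mem_nhds hxm.1 hx2) (fun y hy => hz y ⟨hy.1.le, hy.2.le⟩)
        show deriv (u τ) x = 0
        rw [he.deriv_eq]
        simp
      simp only [Afun]
      rw [hu0, hux]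
      ring
    calc (∫ x in (0:ℝ)..L, Afun s φ u α τ x) = ∫ x in (0:ℝ)..L, (0:ℝ) :=
          intervalIntegral.integral_congr_ae h0
      _ = 0 := intervalIntegral.integral_zero
  have hAT := hzero T (fun y hy => (hic y hy).2)
  have hA0 := hzero 0 (fun y hy => (hic y hy).1)
  have hBint : ((∫ t in (0:ℝ)..T, Cfun s φ u α t L) - ∫ t in (0:ℝ)..T, Cfun s φ u α t 0)
      = ∫ t in (0:ℝ)..T, (B t L - B t 0) := by
    have hCl : IntervalIntegrable (fun t => Cfun s φ u α t L) volume 0 T :=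
      (hcC.comp (continuous_id.prodMk continuous_const)).intervalIntegrable 0 T
    have hC0 : IntervalIntegrable (fun t => Cfun s φ u α t 0) volume 0 T :=
      (hcC.comp (continuous_id.prodMk continuous_const)).intervalIntegrable 0 T
    rw [← intervalIntegral.integral_sub hCl hC0]
    apply intervalIntegral.integral_congr_ae
    filter_upwards [haeT] with t htne htm
    rw [Set.uIoc_of_le hT.le] at htm
    have ht2 : t < T := lt_of_le_of_ne htm.2 htne
    obtain ⟨hb1, hb2, hb3⟩ := hbc t ⟨htm.1.le, htm.2⟩
    have hut0 : pdt u t 0 = 0 := by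
      have he : (fun τ => u τ 0) =ᶠ[nhds t] (fun _ => (0:ℝ)) :=
        Filter.eventuallyEq_of_mem (Ioo_mem_nhds htm.1 ht2) (fun τ hτ => (hbc τ ⟨hτ.1.le, hτ.2.le⟩).1)
      show deriv (fun τ => u τ 0) t = 0
      rw [he.deriv_eq]
      simp
    simp only [hB, Cfun]
    rw [hb1, hb2, hb3, hut0]
    ring
  have innerG : ∀ t : ℝ, (∫ x in (0:ℝ)..L, (G1fun s φ u α t x + G2fun s φ u α t x - 9 * s * G3fun φ u t x))
      = (∫ x in (0:ℝ)..L, G1fun s φ u α t x) + (∫ x in (0:ℝ)..L, G2fun s φ u α t x)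
        - 9 * s * ∫ x in (0:ℝ)..L, G3fun φ u t x := by
    intro t
    rw [intervalIntegral.integral_sub ((sliceII hcG1 t).add (sliceII hcG2 t))
        ((sliceII hcG3 t).const_mul (9 * s)),
      intervalIntegral.integral_add (sliceII hcG1 t) (sliceII hcG2 t),
      intervalIntegral.integral_const_mul]
  have dblG : (∫ t in (0:ℝ)..T, ∫ x in (0:ℝ)..L, (G1fun s φ u α t x + G2fun s φ u α t x - 9 * s * G3fun φ u t x))
      = (∫ t in (0:ℝ)..T, ∫ x in (0:ℝ)..L, G1fun s φ u α t x)
        + (∫ t in (0:ℝ)..T, ∫ x in (0:ℝ)..L, G2fun s φ u α t x)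
        - 9 * s * ∫ t in (0:ℝ)..T, ∫ x in (0:ℝ)..L, G3fun φ u t x := by
    rw [intervalIntegral.integral_congr
      (g := fun t => (∫ x in (0:ℝ)..L, G1fun s φ u α t x) + (∫ x in (0:ℝ)..L, G2fun s φ u α t x)
        - 9 * s * ∫ x in (0:ℝ)..L, G3fun φ u t x)
      (fun t _ => innerG t),
      intervalIntegral.integral_sub ((paramC hcG1).add (paramC hcG2))
        ((paramC hcG3).const_mul (9 * s)),
      intervalIntegral.integral_add (paramC hcG1) (paramC hcG2),
      intervalIntegral.integral_const_mul]
  have e1 : (∫ t in (0:ℝ)..T, ∫ x in (0:ℝ)..L, (-(pdt α t x + pdx (pdx (pdx α)) t x + 3 * s ^ 2 * (pdx φ t x) ^ 2 * pdx α t x)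
            + 9 * s ^ 3 *
                (pdx (pdx (fun t x => (pdx φ t x) ^ 2 * pdx (pdx φ) t x)) t x
                  - pdx (fun t x => pdx φ t x * (pdx (pdx φ) t x) ^ 2) t x)) * (u t x) ^ 2)
      = ∫ t in (0:ℝ)..T, ∫ x in (0:ℝ)..L, G1fun s φ u α t x :=
    intervalIntegral.integral_congr (fun t _ => intervalIntegral.integral_congr (fun x _ => by
      rw [pdx2_Qfun φ hφ t x, pdx_Rfun φ hφ t x]
      simp only [G1fun]
      ring))
  have e2 : (∫ t in (0:ℝ)..T, ∫ x in (0:ℝ)..L, (3 * pdx α t x - 27 * s ^ 3 * (pdx φ t x) ^ 2 * pdx (pdx φ) t x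
              + 3 * s * (pdt (pdx φ) t x + pdx (pdx (pdx (pdx φ))) t x)) * (pdx u t x) ^ 2)
      = ∫ t in (0:ℝ)..T, ∫ x in (0:ℝ)..L, G2fun s φ u α t x :=
    intervalIntegral.integral_congr (fun t _ => intervalIntegral.integral_congr (fun x _ => by
      simp only [G2fun]
      try ring))
  have e3 : (∫ t in (0:ℝ)..T, ∫ x in (0:ℝ)..L, pdx (pdx φ) t x * (pdx (pdx u) t x) ^ 2)
      = ∫ t in (0:ℝ)..T, ∫ x in (0:ℝ)..L, G3fun φ u t x :=
    intervalIntegral.integral_congr (fun t _ => intervalIntegral.integral_congr (fun x _ => by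
      simp only [G3fun]))
  calc 2 * (∫ t in (0:ℝ)..T, ∫ x in (0:ℝ)..L, M1 t x * M2 t x)
      = ∫ t in (0:ℝ)..T, 2 * ∫ x in (0:ℝ)..L, M1 t x * M2 t x :=
        (intervalIntegral.integral_const_mul 2 _).symm
    _ = ∫ t in (0:ℝ)..T, ∫ x in (0:ℝ)..L, 2 * (M1 t x * M2 t x) :=
        intervalIntegral.integral_congr (fun t _ => (intervalIntegral.integral_const_mul 2 _).symm)
    _ = (∫ t in (0:ℝ)..T, ∫ x in (0:ℝ)..L, (G1fun s φ u α t x + G2fun s φ u α t x - 9 * s * G3fun φ u t x))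
        + ∫ t in (0:ℝ)..T, ∫ x in (0:ℝ)..L, (fderiv ℝ (uncurry (Afun s φ u α)) (t, x) (1, 0) + fderiv ℝ (uncurry (Cfun s φ u α)) (t, x) (0, 1)) := dblEq
    _ = (∫ t in (0:ℝ)..T, ∫ x in (0:ℝ)..L, (G1fun s φ u α t x + G2fun s φ u α t x - 9 * s * G3fun φ u t x))
        + ((((∫ t in (0:ℝ)..T, Cfun s φ u α t L) - ∫ t in (0:ℝ)..T, Cfun s φ u α t 0)
          + ∫ x in (0:ℝ)..L, Afun s φ u α T x) - ∫ x in (0:ℝ)..L, Afun s φ u α 0 x) := by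
        rw [hdiv']
    _ = (∫ t in (0:ℝ)..T, ∫ x in (0:ℝ)..L,
          (-(pdt α t x + pdx (pdx (pdx α)) t x + 3 * s ^ 2 * (pdx φ t x) ^ 2 * pdx α t x)
            + 9 * s ^ 3 *
                (pdx (pdx (fun t x => (pdx φ t x) ^ 2 * pdx (pdx φ) t x)) t x
                  - pdx (fun t x => pdx φ t x * (pdx (pdx φ) t x) ^ 2) t x)) * (u t x) ^ 2)
        + (∫ t in (0:ℝ)..T, ∫ x in (0:ℝ)..L,
            (3 * pdx α t x - 27 * s ^ 3 * (pdx φ t x) ^ 2 * pdx (pdx φ) t x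
              + 3 * s * (pdt (pdx φ) t x + pdx (pdx (pdx (pdx φ))) t x)) * (pdx u t x) ^ 2)
        - 9 * s * (∫ t in (0:ℝ)..T, ∫ x in (0:ℝ)..L, pdx (pdx φ) t x * (pdx (pdx u) t x) ^ 2)
        + ∫ t in (0:ℝ)..T, (B t L - B t 0) := by
        rw [hAT, hA0, hBint, dblG, ← e1, ← e2, ← e3]
        ring
end

section
/- Let L > 0. For every w ∈ C²([0,L]) with w(0) = w(L) = 0, one has: ∫₀^L w'(x)² dx ≤ 4 ∫₀^L x² w''(x)² dx + 2L · w'(L)². -/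
/-- For `L > 0` and `w ∈ C²([0,L])` with `w(0) = w(L) = 0`,
`∫₀^L w'(x)² dx ≤ 4 ∫₀^L x² w''(x)² dx + 2 * L * (deriv w L) ^ 2`. -/
theorem stmt_8 (L : ℝ) (hL : 0 < L) (w : ℝ → ℝ) (hw : ContDiff ℝ 2 w)
    (h0 : w 0 = 0) (hLval : w L = 0) :
    (∫ x in (0:ℝ)..L, (deriv w x) ^ 2) ≤
      4 * (∫ x in (0:ℝ)..L, x ^ 2 * (deriv (deriv w) x) ^ 2) + 2 * L * (deriv w L) ^ 2 := by
  set v := deriv w with hvdef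
  have hv1 : ContDiff ℝ 1 v := by
    have : ContDiff ℝ (1 + 1) w := by norm_num at hw ⊢; exact hw
    exact (contDiff_succ_iff_deriv.mp this).2.2
  obtain ⟨hvdiff, hv'cont⟩ := contDiff_one_iff_deriv.mp hv1
  have hvcont : Continuous v := hvdiff.continuous
  -- FTC: ∫₀^L (v² + 2 x v v') = L v(L)²
  have hderiv : ∀ x ∈ Set.uIcc (0:ℝ) L, HasDerivAt (fun x => x * v x ^ 2)
      (v x ^ 2 + x * (2 * v x * deriv v x)) x := by
    intro x _
    have h1 : HasDerivAt (fun x : ℝ => x) 1 x := hasDerivAt_id x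
    have h2 : HasDerivAt (fun x => v x ^ 2) (2 * v x * deriv v x) x := by
      simpa using ((hvdiff x).hasDerivAt.fun_pow 2)
    simpa [mul_comm, mul_assoc] using h1.fun_mul h2
  have hcont : Continuous (fun x => v x ^ 2 + x * (2 * v x * deriv v x)) := by
    continuity
  have hftc : (∫ x in (0:ℝ)..L, (v x ^ 2 + x * (2 * v x * deriv v x)))
      = L * v L ^ 2 - 0 * v 0 ^ 2 := by
    apply intervalIntegral.integral_eq_sub_of_hasDerivAt hderiv
    exact hcont.intervalIntegrable 0 L
  -- integrability facts
  have i1 : IntervalIntegrable (fun x => v x ^ 2) MeasureTheory.volume 0 L :=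
    (by continuity : Continuous fun x => v x ^ 2).intervalIntegrable 0 L
  have i2 : IntervalIntegrable (fun x => x * (2 * v x * deriv v x)) MeasureTheory.volume 0 L :=
    (by continuity : Continuous fun x => x * (2 * v x * deriv v x)).intervalIntegrable 0 L
  have i3 : IntervalIntegrable (fun x => x ^ 2 * deriv v x ^ 2) MeasureTheory.volume 0 L :=
    (by continuity : Continuous fun x => x ^ 2 * deriv v x ^ 2).intervalIntegrable 0 L
  have hsplit : (∫ x in (0:ℝ)..L, (v x ^ 2 + x * (2 * v x * deriv v x)))
      = (∫ x in (0:ℝ)..L, v x ^ 2) + ∫ x in (0:ℝ)..L, x * (2 * v x * deriv v x) :=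
    intervalIntegral.integral_add i1 i2
  -- pointwise bound: -(v²/2 + 2 x² v'²) ≤ 2 x v v'
  have hmono : -((∫ x in (0:ℝ)..L, v x ^ 2) / 2 + 2 * ∫ x in (0:ℝ)..L, x ^ 2 * deriv v x ^ 2)
      ≤ ∫ x in (0:ℝ)..L, x * (2 * v x * deriv v x) := by
    have : (∫ x in (0:ℝ)..L, -(v x ^ 2 / 2 + 2 * (x ^ 2 * deriv v x ^ 2)))
        ≤ ∫ x in (0:ℝ)..L, x * (2 * v x * deriv v x) := by
      apply intervalIntegral.integral_mono_on hL.le _ i2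
      · intro x _
        nlinarith [sq_nonneg (v x + 2 * x * deriv v x), sq_nonneg (v x - 2 * x * deriv v x)]
      · exact ((i1.div_const 2).add (i3.const_mul 2)).neg
    calc -((∫ x in (0:ℝ)..L, v x ^ 2) / 2 + 2 * ∫ x in (0:ℝ)..L, x ^ 2 * deriv v x ^ 2)
        = ∫ x in (0:ℝ)..L, -(v x ^ 2 / 2 + 2 * (x ^ 2 * deriv v x ^ 2)) := by
          rw [intervalIntegral.integral_neg, intervalIntegral.integral_add (i1.div_const 2) (i3.const_mul 2),
            intervalIntegral.integral_div, intervalIntegral.integral_const_mul]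
      _ ≤ _ := this
  have key : (∫ x in (0:ℝ)..L, v x ^ 2) + ∫ x in (0:ℝ)..L, x * (2 * v x * deriv v x)
      = L * v L ^ 2 := by rw [← hsplit, hftc]; ring
  linarith [hmono, key]
end

section
/- Let L > 0. There exists a constant C > 0 such that for every w ∈ C²([0,L]) with w(0) = w(L) = 0, one has: ∫₀^L w'(x)² dx ≤ C ∫₀^L x² w''(x)² dx. -/
/-- For `L > 0` there is `C > 0` such that for every `w ∈ C²([0,L])`
with `w(0) = w(L) = 0`, `∫₀^L w'(x)² dx ≤ C ∫₀^L x² w''(x)² dx`. -/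
theorem stmt_9 (L : ℝ) (hL : 0 < L) :
    ∃ C : ℝ, 0 < C ∧ ∀ w : ℝ → ℝ, ContDiff ℝ 2 w → w 0 = 0 → w L = 0 →
      (∫ x in (0:ℝ)..L, (deriv w x) ^ 2) ≤
        C * ∫ x in (0:ℝ)..L, x ^ 2 * (deriv (deriv w) x) ^ 2 := by
  refine ⟨4, by norm_num, ?_⟩
  intro w hw hw0 hwL
  have hw' : Differentiable ℝ w := hw.differentiable (by norm_num)
  have hv : ContDiff ℝ 1 (deriv w) :=
    (contDiff_succ_iff_deriv.mp (by exact_mod_cast hw : ContDiff ℝ ((1:ℕ)+1) w)).2.2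
  have hvd : Differentiable ℝ (deriv w) := hv.differentiable (by norm_num)
  have hvc : Continuous (deriv w) := hvd.continuous
  have hfc : Continuous (deriv (deriv w)) := hv.continuous_deriv le_rfl
  set v := deriv w with hv_def
  set f := deriv v with hf_def
  set ψ : ℝ → ℝ := fun x => v L - v x with hψ
  have hψc : Continuous ψ := continuous_const.sub hvc
  have hψL : ψ L = 0 := by simp [hψ]
  -- mean-zero of v
  have hmean : (∫ x in (0:ℝ)..L, v x) = 0 := by
    rw [hv_def, intervalIntegral.integral_deriv_eq_sub
      (fun x _ => hw'.differentiableAt) (hvc.intervalIntegrable _ _), hwL, hw0, sub_zero]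
  -- integration by parts
  have hg : ∀ x : ℝ, HasDerivAt (fun y => y * ψ y ^ 2)
      (ψ x ^ 2 - 2 * x * ψ x * f x) x := by
    intro x
    have hψd : HasDerivAt ψ (-(f x)) x := by
      have hvx : HasDerivAt v (f x) x := (hvd x).hasDerivAt
      simpa [hψ] using hvx.const_sub (v L)
    have h : HasDerivAt (fun y => y * ψ y ^ 2)
        (1 * ψ x ^ 2 + x * (((2:ℕ):ℝ) * ψ x ^ (2 - 1) * -f x)) x :=
      (hasDerivAt_id x).mul (hψd.pow 2)
    convert h using 1
    simp [pow_one]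
    ring
  have hint1 : IntervalIntegrable (fun x => ψ x ^ 2 - 2 * x * ψ x * f x) MeasureTheory.volume 0 L :=
    ((hψc.pow 2).sub ((((continuous_const.mul continuous_id).mul hψc).mul hfc))).intervalIntegrable _ _
  have hparts : (∫ x in (0:ℝ)..L, (ψ x ^ 2 - 2 * x * ψ x * f x)) = 0 := by
    rw [intervalIntegral.integral_eq_sub_of_hasDerivAt (fun x _ => hg x) hint1]
    simp [hψL]
  have hintψ2 : IntervalIntegrable (fun x => ψ x ^ 2) MeasureTheory.volume 0 L :=
    (hψc.pow 2).intervalIntegrable _ _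
  have hintxψf : IntervalIntegrable (fun x => 2 * x * ψ x * f x) MeasureTheory.volume 0 L :=
    (((continuous_const.mul continuous_id).mul hψc).mul hfc).intervalIntegrable _ _
  have hintB : IntervalIntegrable (fun x => x ^ 2 * f x ^ 2) MeasureTheory.volume 0 L :=
    ((continuous_id.pow 2).mul (hfc.pow 2)).intervalIntegrable _ _
  have hA_eq : (∫ x in (0:ℝ)..L, ψ x ^ 2) = ∫ x in (0:ℝ)..L, 2 * x * ψ x * f x := by
    have := intervalIntegral.integral_sub hintψ2 hintxψf
    rw [hparts] at this
    linarith [this.symm]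
  -- AM-GM bound
  have hAMGM : (∫ x in (0:ℝ)..L, 2 * x * ψ x * f x)
      ≤ ∫ x in (0:ℝ)..L, ((1/2) * ψ x ^ 2 + 2 * (x ^ 2 * f x ^ 2)) := by
    apply intervalIntegral.integral_mono_on hL.le hintxψf
      ((hintψ2.const_mul _).add (hintB.const_mul _))
    intro x _
    clear_value ψ f v
    have h := sq_nonneg (ψ x - 2 * x * f x)
    have h2 : (ψ x - 2 * x * f x) ^ 2
        = ψ x ^ 2 - 4 * (x * ψ x * f x) + 4 * (x ^ 2 * f x ^ 2) := by ring
    have h3 : 2 * x * ψ x * f x = 2 * (x * ψ x * f x) := by ring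
    rw [h2] at h
    rw [h3]
    linarith
  have hsplit : (∫ x in (0:ℝ)..L, ((1/2) * ψ x ^ 2 + 2 * (x ^ 2 * f x ^ 2)))
      = (1/2) * (∫ x in (0:ℝ)..L, ψ x ^ 2) + 2 * ∫ x in (0:ℝ)..L, x ^ 2 * f x ^ 2 := by
    rw [intervalIntegral.integral_add (hintψ2.const_mul _) (hintB.const_mul _),
      intervalIntegral.integral_const_mul, intervalIntegral.integral_const_mul]
  have hAB : (∫ x in (0:ℝ)..L, ψ x ^ 2) ≤ 4 * ∫ x in (0:ℝ)..L, x ^ 2 * f x ^ 2 := by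
    rw [hA_eq]
    rw [hsplit] at hAMGM
    linarith [hA_eq]
  -- relate ∫ v² to ∫ ψ²
  have hψint : (∫ x in (0:ℝ)..L, ψ x) = L * v L := by
    rw [hψ]
    rw [intervalIntegral.integral_sub (intervalIntegrable_const) (hvc.intervalIntegrable _ _),
      hmean, intervalIntegral.integral_const, sub_zero, sub_zero, smul_eq_mul]
  have hvexp : (∫ x in (0:ℝ)..L, v x ^ 2)
      = (∫ x in (0:ℝ)..L, (v L ^ 2 - 2 * v L * ψ x + ψ x ^ 2)) := by
    apply intervalIntegral.integral_congr
    intro x _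
    simp only [hψ]
    ring
  have hvsplit : (∫ x in (0:ℝ)..L, v x ^ 2)
      = L * v L ^ 2 - 2 * v L * (L * v L) + ∫ x in (0:ℝ)..L, ψ x ^ 2 := by
    rw [hvexp, intervalIntegral.integral_add
      (intervalIntegrable_const.sub ((hψc.intervalIntegrable _ _).const_mul _)) hintψ2,
      intervalIntegral.integral_sub intervalIntegrable_const ((hψc.intervalIntegrable _ _).const_mul _),
      intervalIntegral.integral_const, intervalIntegral.integral_const_mul, hψint,
      sub_zero, smul_eq_mul]
  have hLv : 0 ≤ L * v L ^ 2 := mul_nonneg hL.le (sq_nonneg _)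
  calc (∫ x in (0:ℝ)..L, v x ^ 2)
      ≤ ∫ x in (0:ℝ)..L, ψ x ^ 2 := by rw [hvsplit]; nlinarith [sq_nonneg (v L)]
    _ ≤ 4 * ∫ x in (0:ℝ)..L, x ^ 2 * f x ^ 2 := hAB
end

section
/- Let L > 0. For every w ∈ C^∞ compactly supported in the open interval (0,L), one has the identity: ∫₀^L w'(x) ( w''(x)/(L−x) + 2 w'(x)/(L−x)² + 2 w(x)/(L−x)³ + w(x)/(L−x) ) dx = (3/2) ∫₀^L w'(x)²/(L−x)² dx − 3 ∫₀^L w(x)²/(L−x)⁴ dx − (1/2) ∫₀^L w(x)²/(L−x)² dx. -/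
open Set Filter Topology

/-- For `L > 0` and `w ∈ C^∞` compactly supported in `(0,L)`,
the quadratic form identity
`∫₀^L w'( w''/(L−x) + 2w'/(L−x)² + 2w/(L−x)³ + w/(L−x) ) dx
  = (3/2)∫₀^L w'²/(L−x)² dx − 3∫₀^L w²/(L−x)⁴ dx − (1/2)∫₀^L w²/(L−x)² dx`. -/
theorem stmt_11 (L : ℝ) (hL : 0 < L) (w : ℝ → ℝ) (hw : ContDiff ℝ (⊤ : ℕ∞) w)
    (hsupp : tsupport w ⊆ Set.Ioo 0 L) :
    (∫ x in (0:ℝ)..L, deriv w x *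
        (deriv (deriv w) x / (L - x) + 2 * deriv w x / (L - x) ^ 2
          + 2 * w x / (L - x) ^ 3 + w x / (L - x))) =
      (3 / 2) * (∫ x in (0:ℝ)..L, (deriv w x) ^ 2 / (L - x) ^ 2)
        - 3 * (∫ x in (0:ℝ)..L, (w x) ^ 2 / (L - x) ^ 4)
        - (1 / 2) * ∫ x in (0:ℝ)..L, (w x) ^ 2 / (L - x) ^ 2 := by
  set u := deriv w with hu
  set v := deriv (deriv w) with hv
  have hwu : ContDiff ℝ (⊤:ℕ∞) u := (contDiff_infty_iff_deriv.mp hw).2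
  have hwv : ContDiff ℝ (⊤:ℕ∞) v := (contDiff_infty_iff_deriv.mp hwu).2
  have hcw : Continuous w := hw.continuous
  have hcu : Continuous u := hwu.continuous
  have hcv : Continuous v := hwv.continuous
  -- eventual vanishing near L
  have hLns : L ∉ tsupport w := fun h => absurd (hsupp h).2 (lt_irrefl L)
  have h0ns : (0:ℝ) ∉ tsupport w := fun h => absurd (hsupp h).1 (lt_irrefl 0)
  have hwL : w =ᶠ[𝓝 L] 0 := by
    filter_upwards [(isClosed_tsupport w).isOpen_compl.mem_nhds hLns] with x hx
    exact image_eq_zero_of_notMem_tsupport hx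
  have hw0 : w =ᶠ[𝓝 (0:ℝ)] 0 := by
    filter_upwards [(isClosed_tsupport w).isOpen_compl.mem_nhds h0ns] with x hx
    exact image_eq_zero_of_notMem_tsupport hx
  have hder0 : deriv (0:ℝ→ℝ) = 0 := by funext x; exact deriv_const x 0
  have huL : u =ᶠ[𝓝 L] 0 := hder0 ▸ hwL.deriv
  have hu0 : u =ᶠ[𝓝 (0:ℝ)] 0 := hder0 ▸ hw0.deriv
  have hvL : v =ᶠ[𝓝 L] 0 := hder0 ▸ huL.deriv
  -- continuity helper
  have hcont : ∀ (f : ℝ → ℝ), Continuous f → f =ᶠ[𝓝 L] 0 → ∀ n : ℕ,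
      Continuous (fun x => f x / (L - x) ^ n) := by
    intro f hf hfL n
    rw [continuous_iff_continuousAt]
    intro x
    by_cases hx : x = L
    · rw [hx]
      have heq : (fun x => f x / (L - x) ^ n) =ᶠ[𝓝 L] (fun _ => (0:ℝ)) := by
        filter_upwards [hfL] with y hy; simp [hy]
      exact ContinuousAt.congr continuousAt_const heq.symm
    · exact ContinuousAt.div hf.continuousAt (by fun_prop)
        (pow_ne_zero _ (sub_ne_zero.2 (Ne.symm hx)))
  -- integrand functions
  set H : ℝ → ℝ := fun x => u x *
      (v x / (L - x) + 2 * u x / (L - x) ^ 2 + 2 * w x / (L - x) ^ 3 + w x / (L - x))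
    with hH
  set g1 : ℝ → ℝ := fun x => (u x) ^ 2 / (L - x) ^ 2 with hg1
  set g2 : ℝ → ℝ := fun x => (w x) ^ 2 / (L - x) ^ 4 with hg2
  set g3 : ℝ → ℝ := fun x => (w x) ^ 2 / (L - x) ^ 2 with hg3
  set G : ℝ → ℝ := fun x => 3 / 2 * g1 x - 3 * g2 x - 1 / 2 * g3 x with hG
  have hcg1 : Continuous g1 := hcont (fun x => (u x)^2) (by fun_prop)
    (by filter_upwards [huL] with y hy; simp [hy]) 2
  have hcg2 : Continuous g2 := hcont (fun x => (w x)^2) (by fun_prop)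
    (by filter_upwards [hwL] with y hy; simp [hy]) 4
  have hcg3 : Continuous g3 := hcont (fun x => (w x)^2) (by fun_prop)
    (by filter_upwards [hwL] with y hy; simp [hy]) 2
  have hcH : Continuous H := by
    have c1 : Continuous (fun x => v x / (L - x) ^ 1) := hcont v hcv hvL 1
    have c2 : Continuous (fun x => (2 * u x) / (L - x) ^ 2) :=
      hcont (fun x => 2 * u x) (by fun_prop) (by filter_upwards [huL] with y hy; simp [hy]) 2
    have c3 : Continuous (fun x => (2 * w x) / (L - x) ^ 3) :=
      hcont (fun x => 2 * w x) (by fun_prop) (by filter_upwards [hwL] with y hy; simp [hy]) 3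
    have c4 : Continuous (fun x => w x / (L - x) ^ 1) := hcont w hcw hwL 1
    simp only [pow_one] at c1 c4
    have : Continuous (fun x => v x / (L - x) + 2 * u x / (L - x) ^ 2
        + 2 * w x / (L - x) ^ 3 + w x / (L - x)) := by
      simp only [mul_div_assoc] at c2 c3 ⊢
      exact ((c1.add c2).add c3).add c4
    exact hcu.mul this
  have hcG : Continuous G := by
    apply Continuous.sub (Continuous.sub _ _) _ <;> fun_prop
  -- antiderivative
  set F : ℝ → ℝ := fun x => (u x) ^ 2 / (2 * (L - x)) + (w x) ^ 2 / (L - x) ^ 3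
      + (w x) ^ 2 / (2 * (L - x)) with hF
  have key : ∀ x ∈ Set.uIcc (0:ℝ) L, HasDerivAt F (H x - G x) x := by
    intro x hx
    rw [Set.uIcc_of_le hL.le] at hx
    by_cases hxL : x = L
    · rw [hxL]
      have hFL : F =ᶠ[𝓝 L] (fun _ => (0:ℝ)) := by
        filter_upwards [hwL, huL] with y h1 h2
        simp [hF, h1, h2]
      have hd : HasDerivAt F 0 L :=
        (hasDerivAt_const L (0:ℝ)).congr_of_eventuallyEq hFL
      have hzw : w L = 0 := hwL.eq_of_nhds
      have hzu : u L = 0 := huL.eq_of_nhds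
      have hzv : v L = 0 := hvL.eq_of_nhds
      have : H L - G L = 0 := by simp [hH, hG, hg1, hg2, hg3, hzw, hzu, hzv]
      rw [this]; exact hd
    · have hne : L - x ≠ 0 := sub_ne_zero.2 (Ne.symm hxL)
      have hdw : HasDerivAt w (u x) x := (hw.differentiable (by simp) x).hasDerivAt
      have hdu : HasDerivAt u (v x) x := (hwu.differentiable (by simp) x).hasDerivAt
      have hds : HasDerivAt (fun y => L - y) (-1) x := (hasDerivAt_id x).const_sub L
      have hd1 : HasDerivAt (fun y => (u y) ^ 2 / (2 * (L - y)))
          ((2 * u x ^ 1 * v x * (2 * (L - x)) - u x ^ 2 * (2 * (-1))) / (2 * (L - x)) ^ 2) x :=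
        (hdu.pow 2).div (hds.const_mul 2) (by positivity)
      have hd2 : HasDerivAt (fun y => (w y) ^ 2 / (L - y) ^ 3)
          ((2 * w x ^ 1 * u x * (L - x) ^ 3 - w x ^ 2 * (3 * (L - x) ^ 2 * (-1)))
            / ((L - x) ^ 3) ^ 2) x :=
        (hdw.pow 2).div (hds.pow 3) (by positivity)
      have hd3 : HasDerivAt (fun y => (w y) ^ 2 / (2 * (L - y)))
          ((2 * w x ^ 1 * u x * (2 * (L - x)) - w x ^ 2 * (2 * (-1))) / (2 * (L - x)) ^ 2) x :=
        (hdw.pow 2).div (hds.const_mul 2) (by positivity)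
      have := (hd1.add hd2).add hd3
      convert this using 1
      · rfl
      · rfl
      · rfl
      simp only [hH, hG, hg1, hg2, hg3]
      field_simp
      ring
  have hintHG : IntervalIntegrable (fun x => H x - G x) MeasureTheory.volume 0 L :=
    (hcH.sub hcG).intervalIntegrable 0 L
  have hintH : IntervalIntegrable H MeasureTheory.volume 0 L := hcH.intervalIntegrable 0 L
  have hintG : IntervalIntegrable G MeasureTheory.volume 0 L := hcG.intervalIntegrable 0 L
  have hFTC : (∫ x in (0:ℝ)..L, (H x - G x)) = F L - F 0 :=
    intervalIntegral.integral_eq_sub_of_hasDerivAt key hintHG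
  have hF0 : F 0 = 0 := by
    have hzw : w 0 = 0 := hw0.eq_of_nhds
    have hzu : u 0 = 0 := hu0.eq_of_nhds
    simp [hF, hzw, hzu]
  have hFL : F L = 0 := by
    have hzw : w L = 0 := hwL.eq_of_nhds
    have hzu : u L = 0 := huL.eq_of_nhds
    simp [hF, hzw, hzu]
  rw [intervalIntegral.integral_sub hintH hintG, hFL, hF0, sub_zero, sub_eq_zero] at hFTC
  have hsplit : (∫ x in (0:ℝ)..L, G x)
      = 3 / 2 * (∫ x in (0:ℝ)..L, g1 x) - 3 * (∫ x in (0:ℝ)..L, g2 x)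
        - 1 / 2 * (∫ x in (0:ℝ)..L, g3 x) := by
    rw [hG]
    rw [intervalIntegral.integral_sub, intervalIntegral.integral_sub,
      intervalIntegral.integral_const_mul, intervalIntegral.integral_const_mul,
      intervalIntegral.integral_const_mul]
    · exact (hcg1.intervalIntegrable 0 L).const_mul _
    · exact (hcg2.intervalIntegrable 0 L).const_mul _
    · exact ((hcg1.intervalIntegrable 0 L).const_mul _).sub
        ((hcg2.intervalIntegrable 0 L).const_mul _)
    · exact (hcg3.intervalIntegrable 0 L).const_mul _
  calc (∫ x in (0:ℝ)..L, H x) = ∫ x in (0:ℝ)..L, G x := hFTC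
    _ = _ := by rw [hsplit]
end
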